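/- arXiv:math/0411260 — 3 statements merged into one kernel-verified Lean document; each statement's English description precedes it below -/
import Mathlib

section
/- Let M be a loopless matroid on [n] and let 𝓖 be a building set in the lattice of flats L_M of M. Then a vector w ∈ ℝ^n lies in the Bergman fan B̃(M) if and only if there exist a subset S of 𝓖 ∪ {[n]} that is nested with respect to the building set 𝓖 ∪ {[n]}, nonnegative reals c_G for G ∈ S, and a real number λ, such that w = λ·(1,…,1) + Σ_{G∈S} c_G e_G, where e_G denotes the 0/1 indicator vector of the flat G. -/
open Finset Pointwise

/-- The 0/1 indicator vector (in `ℝ^n`) of a finite set of coordinates. -/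
def indVec {n : ℕ} (S : Finset (Fin n)) : Fin n → ℝ := fun i => if i ∈ S then 1 else 0

/-- Independence with respect to a family `𝔅` of bases: being contained in a basis. -/
def FamIndep {n : ℕ} (𝔅 : Finset (Finset (Fin n))) (I : Finset (Fin n)) : Prop :=
  ∃ B ∈ 𝔅, I ⊆ B

/-- Circuits of the family `𝔅`: minimal dependent sets. -/
def FamCircuit {n : ℕ} (𝔅 : Finset (Finset (Fin n))) (C : Finset (Fin n)) : Prop :=
  ¬ FamIndep 𝔅 C ∧ ∀ D ⊂ C, FamIndep 𝔅 D

open scoped Classical in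
/-- The rank of a set: maximal cardinality of an independent subset. -/
noncomputable def famRk {n : ℕ} (𝔅 : Finset (Finset (Fin n))) (F : Finset (Fin n)) : ℕ :=
  (F.powerset.filter (fun I => FamIndep 𝔅 I)).sup Finset.card

open scoped Classical in
/-- The bases of the restriction to `F`: the maximal independent subsets of `F`. -/
noncomputable def famRestrictBases {n : ℕ} (𝔅 : Finset (Finset (Fin n)))
    (F : Finset (Fin n)) : Finset (Finset (Fin n)) :=
  F.powerset.filter fun B =>
    FamIndep 𝔅 B ∧ ∀ B' ⊆ F, FamIndep 𝔅 B' → B ⊆ B' → B = B'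

open scoped Classical in
/-- The bases of the contraction by `F`: the sets `B \ F` where `B` is a basis meeting `F`
in a set of full rank `rk F`. -/
noncomputable def famContractBases {n : ℕ} (𝔅 : Finset (Finset (Fin n)))
    (F : Finset (Fin n)) : Finset (Finset (Fin n)) :=
  (𝔅.filter fun B => (B ∩ F).card = famRk 𝔅 F).image (· \ F)

/-- `i` and `j` are related if equal or contained in a common circuit. -/
def FamConnRel {n : ℕ} (𝔅 : Finset (Finset (Fin n))) (i j : Fin n) : Prop :=
  i = j ∨ ∃ C, FamCircuit 𝔅 C ∧ i ∈ C ∧ j ∈ C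

/-- Number of connected components: number of classes of the equivalence relation
generated by `FamConnRel`. -/
noncomputable def famNumComponents {n : ℕ} (𝔅 : Finset (Finset (Fin n))) : ℕ :=
  Nat.card (Quot (FamConnRel 𝔅))

/-- Connectedness of the matroid presented by bases `𝔅` on the ground set `E`:
any two distinct elements of `E` lie in a common circuit (within `E`). -/
def FamConnectedOn {n : ℕ} (𝔅 : Finset (Finset (Fin n))) (E : Finset (Fin n)) : Prop :=
  ∀ i ∈ E, ∀ j ∈ E, i ≠ j → ∃ C, C ⊆ E ∧ FamCircuit 𝔅 C ∧ i ∈ C ∧ j ∈ C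

/-- A matroid of rank `r` on the ground set `Fin n`, given by its collection of bases:
`r`-element sets satisfying the basis exchange axiom. -/
structure FinMatroid (n r : ℕ) where
  bases : Finset (Finset (Fin n))
  bases_nonempty : bases.Nonempty
  card_bases : ∀ B ∈ bases, B.card = r
  exchange : ∀ B₁ ∈ bases, ∀ B₂ ∈ bases, ∀ i ∈ B₁ \ B₂,
      ∃ j ∈ B₂ \ B₁, insert j (B₁.erase i) ∈ bases

namespace FinMatroid

variable {n r : ℕ}

def Indep (M : FinMatroid n r) (I : Finset (Fin n)) : Prop := FamIndep M.bases I

def IsCircuit (M : FinMatroid n r) (C : Finset (Fin n)) : Prop := FamCircuit M.bases C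

noncomputable def rk (M : FinMatroid n r) (F : Finset (Fin n)) : ℕ := famRk M.bases F

/-- A flat: no circuit leaves exactly one element outside `F`. -/
def IsFlat (M : FinMatroid n r) (F : Finset (Fin n)) : Prop :=
  ∀ C, M.IsCircuit C → (C \ F).card ≠ 1

open scoped Classical in
/-- Closure of a set: the intersection of all flats containing it (the smallest flat
containing it). -/
noncomputable def closure (M : FinMatroid n r) (S : Finset (Fin n)) : Finset (Fin n) :=
  Finset.univ.filter fun i => ∀ F, M.IsFlat F → S ⊆ F → i ∈ F

/-- No single element is dependent. -/
def Loopless (M : FinMatroid n r) : Prop := ∀ i : Fin n, M.Indep {i}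

noncomputable def numComponents (M : FinMatroid n r) : ℕ := famNumComponents M.bases

/-- Any two distinct elements lie in a common circuit. -/
def Connected (M : FinMatroid n r) : Prop :=
  ∀ i j : Fin n, i ≠ j → ∃ C, M.IsCircuit C ∧ i ∈ C ∧ j ∈ C

/-- `B` is a `w`-maximal basis of `M`. -/
def IsMaxBasis (M : FinMatroid n r) (w : Fin n → ℝ) (B : Finset (Fin n)) : Prop :=
  B ∈ M.bases ∧ ∀ B' ∈ M.bases, ∑ i ∈ B', w i ≤ ∑ i ∈ B, w i

open scoped Classical in
/-- The bases of the matroid `M_w`: the `w`-maximal bases of `M`. -/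
noncomputable def maxBases (M : FinMatroid n r) (w : Fin n → ℝ) :
    Finset (Finset (Fin n)) :=
  M.bases.filter fun B => ∀ B' ∈ M.bases, ∑ i ∈ B', w i ≤ ∑ i ∈ B, w i

/-- Membership in the Bergman fan: on every circuit the minimum of `w` is attained
at least twice. -/
def InBergmanFan (M : FinMatroid n r) (w : Fin n → ℝ) : Prop :=
  ∀ C, M.IsCircuit C → ∃ i ∈ C, ∃ j ∈ C, i ≠ j ∧ w i = w j ∧ ∀ k ∈ C, w i ≤ w k

/-- The matroid polytope: convex hull of the indicator vectors of the bases. -/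
noncomputable def polytope (M : FinMatroid n r) : Set (Fin n → ℝ) :=
  convexHull ℝ (indVec '' ↑M.bases)

noncomputable def restrictBases (M : FinMatroid n r) (F : Finset (Fin n)) :
    Finset (Finset (Fin n)) :=
  famRestrictBases M.bases F

noncomputable def contractBases (M : FinMatroid n r) (F : Finset (Fin n)) :
    Finset (Finset (Fin n)) :=
  famContractBases M.bases F

/-- `𝓖` is a building set in the lattice of flats of `M` (with bottom element `∅` and
join = closure of union): for every nonempty flat `X`, the join map is an order
isomorphism from the product of the lower intervals of the maximal elements of
`𝓖` below `X` onto the lower interval of `X`. -/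
def IsFlatBuilding (M : FinMatroid n r) (𝓖 : Set (Finset (Fin n))) : Prop :=
  (∀ F ∈ 𝓖, M.IsFlat F ∧ F ≠ ∅) ∧
  ∀ X, M.IsFlat X → X ≠ ∅ →
    ∃ (k : ℕ) (g : Fin k → Finset (Fin n)),
      Function.Injective g ∧
      (∀ i, g i ∈ 𝓖 ∧ g i ⊆ X) ∧
      (∀ i, ∀ H ∈ 𝓖, H ⊆ X → g i ⊆ H → g i = H) ∧
      (∀ H ∈ 𝓖, H ⊆ X → ∃ i, H ⊆ g i) ∧
      ∃ e : (∀ i : Fin k, {F : Finset (Fin n) // M.IsFlat F ∧ F ⊆ g i}) ≃o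
              {F : Finset (Fin n) // M.IsFlat F ∧ F ⊆ X},
        ∀ y, (e y).1 = M.closure (Finset.univ.sup fun i => (y i).1)

/-- `S` is nested with respect to `𝓖` (in the lattice of flats of `M`): `S ⊆ 𝓖` and for
every subcollection of at least two pairwise incomparable members, their join (the
closure of their union) is not in `𝓖`. -/
def IsNested (M : FinMatroid n r) (𝓖 : Set (Finset (Fin n)))
    (S : Finset (Finset (Fin n))) : Prop :=
  ↑S ⊆ 𝓖 ∧ ∀ T ⊆ S, 2 ≤ T.card →
    (∀ A ∈ T, ∀ B ∈ T, A ≠ B → ¬ A ⊆ B ∧ ¬ B ⊆ A) →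
    M.closure (T.sup id) ∉ 𝓖

end FinMatroid

/-- A building set in the Boolean lattice of subsets of `Fin r`: for every nonempty
`X ⊆ [r]`, the union map is an order isomorphism from the product of the lower
intervals of the maximal elements of `𝓕` below `X` onto the lower interval of `X`. -/
def BoolBuilding {r : ℕ} (𝓕 : Set (Finset (Fin r))) : Prop :=
  (∀ F ∈ 𝓕, F ≠ ∅) ∧
  ∀ X : Finset (Fin r), X ≠ ∅ →
    ∃ (k : ℕ) (g : Fin k → Finset (Fin r)),
      Function.Injective g ∧
      (∀ i, g i ∈ 𝓕 ∧ g i ⊆ X) ∧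
      (∀ i, ∀ H ∈ 𝓕, H ⊆ X → g i ⊆ H → g i = H) ∧
      (∀ H ∈ 𝓕, H ⊆ X → ∃ i, H ⊆ g i) ∧
      ∃ e : (∀ i : Fin k, {F : Finset (Fin r) // F ⊆ g i}) ≃o
              {F : Finset (Fin r) // F ⊆ X},
        ∀ y, (e y).1 = Finset.univ.sup fun i => (y i).1

/-- `S` is nested with respect to `𝓕` in the Boolean lattice: for every subcollection
of at least two pairwise incomparable members, their union is not in `𝓕`. -/
def BoolNested {r : ℕ} (𝓕 : Set (Finset (Fin r))) (S : Finset (Finset (Fin r))) : Prop :=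
  ↑S ⊆ 𝓕 ∧ ∀ T ⊆ S, 2 ≤ T.card →
    (∀ A ∈ T, ∀ B ∈ T, A ≠ B → ¬ A ⊆ B ∧ ¬ B ⊆ A) →
    T.sup id ∉ 𝓕

/-- The simplex `Δ_F = conv{e_i : i ∈ F}`. -/
noncomputable def faceSimplex {r : ℕ} (F : Finset (Fin r)) : Set (Fin r → ℝ) :=
  convexHull ℝ ((fun i => (Pi.single i 1 : Fin r → ℝ)) '' ↑F)

/-- The Minkowski sum `Δ_𝓕 = Σ_{F ∈ 𝓕} Δ_F`. -/
noncomputable def minkSum {r : ℕ} (𝓕 : Finset (Finset (Fin r))) : Set (Fin r → ℝ) :=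
  ∑ F ∈ 𝓕, faceSimplex F
section Basics

open Finset

variable {n r : ℕ}

theorem famIndep_subset {𝔅 : Finset (Finset (Fin n))} {I J : Finset (Fin n)}
    (hI : FamIndep 𝔅 I) (hJI : J ⊆ I) : FamIndep 𝔅 J := by
  obtain ⟨B, hB, hIB⟩ := hI
  exact ⟨B, hB, hJI.trans hIB⟩

theorem famIndep_empty (M : FinMatroid n r) : FamIndep M.bases ∅ := by
  obtain ⟨B, hB⟩ := M.bases_nonempty
  exact ⟨B, hB, Finset.empty_subset _⟩

/-- Augmentation for independent sets, derived from basis exchange. -/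
theorem famIndep_aug (M : FinMatroid n r) {I J : Finset (Fin n)}
    (hI : FamIndep M.bases I) (hJ : FamIndep M.bases J) (hIJ : I.card < J.card) :
    ∃ x ∈ J, x ∉ I ∧ FamIndep M.bases (insert x I) := by
  classical
  obtain ⟨B₂, hB₂, hJB₂⟩ := hJ
  obtain ⟨B₁, hB₁, hIB₁⟩ := hI
  have key : ∀ m : ℕ, ∀ B₁ : Finset (Fin n), B₁ ∈ M.bases → I ⊆ B₁ →
      (B₁ \ (B₂ ∪ I)).card = m → ∃ x ∈ J, x ∉ I ∧ FamIndep M.bases (insert x I) := by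
    intro m
    induction m using Nat.strong_induction_on with
    | _ m ih =>
      intro B₁ hB₁ hIB₁ hcard
      by_cases hempty : B₁ \ (B₂ ∪ I) = ∅
      · -- B₁ ⊆ B₂ ∪ I
        have hsub : B₁ ⊆ B₂ ∪ I := by
          intro x hx
          by_contra hx2
          exact (Finset.notMem_empty x) (hempty ▸ Finset.mem_sdiff.2 ⟨hx, hx2⟩)
        by_cases hex : ∃ x ∈ J, x ∈ B₁ ∧ x ∉ I
        · obtain ⟨x, hxJ, hxB₁, hxI⟩ := hex
          exact ⟨x, hxJ, hxI, B₁, hB₁, by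
            intro y hy
            rcases Finset.mem_insert.1 hy with h | h
            · exact h ▸ hxB₁
            · exact hIB₁ h⟩
        · push_neg at hex
          -- counting contradiction
          have hd : B₁ \ I ⊆ B₂ \ J := by
            intro x hx
            rw [Finset.mem_sdiff] at hx ⊢
            refine ⟨?_, fun hxJ => hx.2 (hex x hxJ hx.1)⟩
            rcases Finset.mem_union.1 (hsub hx.1) with h | h
            · exact h
            · exact absurd h hx.2
          have h1 : (B₁ \ I).card = B₁.card - I.card := Finset.card_sdiff_of_subset hIB₁
          have h2 : (B₂ \ J).card = B₂.card - J.card := Finset.card_sdiff_of_subset hJB₂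
          have h3 : (B₁ \ I).card ≤ (B₂ \ J).card := Finset.card_le_card hd
          have h4 : I.card ≤ B₁.card := Finset.card_le_card hIB₁
          have h5 : J.card ≤ B₂.card := Finset.card_le_card hJB₂
          have h6 : B₁.card = r := M.card_bases _ hB₁
          have h7 : B₂.card = r := M.card_bases _ hB₂
          omega
      · obtain ⟨e, he⟩ := Finset.nonempty_iff_ne_empty.2 hempty
        have heB : e ∈ B₁ \ B₂ := by
          rw [Finset.mem_sdiff] at he ⊢
          exact ⟨he.1, fun h => he.2 (Finset.mem_union_left _ h)⟩
        obtain ⟨f, hf, hB₁'⟩ := M.exchange B₁ hB₁ B₂ hB₂ e heB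
        have heI : e ∉ I := fun h => (Finset.mem_sdiff.1 he).2 (Finset.mem_union_right _ h)
        have hIB₁' : I ⊆ insert f (B₁.erase e) := by
          intro x hx
          exact Finset.mem_insert.2 (Or.inr (Finset.mem_erase.2
            ⟨fun hxe => heI (hxe ▸ hx), hIB₁ hx⟩))
        have hset : insert f (B₁.erase e) \ (B₂ ∪ I) = (B₁ \ (B₂ ∪ I)).erase e := by
          ext x
          rw [Finset.mem_sdiff, Finset.mem_insert, Finset.mem_erase, Finset.mem_erase,
            Finset.mem_sdiff]
          constructor
          · rintro ⟨h1 | h1, h2⟩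
            · exact absurd (Finset.mem_union_left _ (h1 ▸ (Finset.mem_sdiff.1 hf).1)) h2
            · exact ⟨h1.1, h1.2, h2⟩
          · rintro ⟨h1, h2, h3⟩
            exact ⟨Or.inr ⟨h1, h2⟩, h3⟩
        have hm : ((B₁ \ (B₂ ∪ I)).erase e).card < m := by
          rw [← hcard]
          exact Finset.card_erase_lt_of_mem he
        exact ih _ hm _ hB₁' hIB₁' (hset ▸ rfl)
  exact key _ B₁ hB₁ hIB₁ rfl

end Basics
section Flats

open Finset

variable {n r : ℕ} {M : FinMatroid n r}

theorem isFlat_univ : M.IsFlat Finset.univ := by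
  intro C _ h
  have : C \ Finset.univ = ∅ := by
    ext y; simp
  rw [this] at h
  simp at h

theorem isFlat_empty (hM : M.Loopless) : M.IsFlat ∅ := by
  intro C hC h
  rw [Finset.sdiff_empty] at h
  obtain ⟨x, hx⟩ := Finset.card_eq_one.1 h
  exact hC.1 (hx ▸ hM x)

theorem fm_subset_closure {S : Finset (Fin n)} : S ⊆ M.closure S := by
  intro i hi
  classical
  rw [FinMatroid.closure, Finset.mem_filter]
  exact ⟨Finset.mem_univ _, fun F _ hSF => hSF hi⟩

theorem closure_subset_flat {S F : Finset (Fin n)} (hF : M.IsFlat F) (hSF : S ⊆ F) :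
    M.closure S ⊆ F := by
  intro i hi
  classical
  rw [FinMatroid.closure, Finset.mem_filter] at hi
  exact hi.2 F hF hSF

theorem isFlat_closure {S : Finset (Fin n)} : M.IsFlat (M.closure S) := by
  intro C hC h
  obtain ⟨x, hx⟩ := Finset.card_eq_one.1 h
  have hxmem : x ∈ C \ M.closure S := hx ▸ Finset.mem_singleton_self x
  have hxC : x ∈ C := (Finset.mem_sdiff.1 hxmem).1
  have hxcl : x ∈ M.closure S := by
    classical
    rw [FinMatroid.closure, Finset.mem_filter]
    refine ⟨Finset.mem_univ _, fun F hF hSF => ?_⟩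
    have hsub : C \ F ⊆ C \ M.closure S := by
      intro y hy
      rw [Finset.mem_sdiff] at hy ⊢
      exact ⟨hy.1, fun h2 => hy.2 (closure_subset_flat hF hSF h2)⟩
    rw [hx] at hsub
    rcases Finset.subset_singleton_iff.1 hsub with h2 | h2
    · have : C ⊆ F := fun y hy => by
        by_contra hyF
        exact (Finset.notMem_empty y) (h2 ▸ Finset.mem_sdiff.2 ⟨hy, hyF⟩)
      exact this hxC
    · exact absurd (by rw [h2]; simp) (hF C hC)
  exact (Finset.mem_sdiff.1 hxmem).2 hxcl

theorem fm_closure_mono {S T : Finset (Fin n)} (h : S ⊆ T) : M.closure S ⊆ M.closure T :=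
  closure_subset_flat isFlat_closure (h.trans fm_subset_closure)

theorem closure_flat_self {F : Finset (Fin n)} (hF : M.IsFlat F) : M.closure F = F :=
  Finset.Subset.antisymm (closure_subset_flat hF (Finset.Subset.refl F)) fm_subset_closure

theorem fm_closure_empty (hM : M.Loopless) : M.closure (∅ : Finset (Fin n)) = ∅ :=
  closure_flat_self (isFlat_empty hM)

/-- Dependence of pairs is transitive through a common element (from augmentation). -/
theorem dep_trans (hM : M.Loopless) {u v c : Fin n}
    (hu : ¬ FamIndep M.bases {u, c}) (hv : ¬ FamIndep M.bases {v, c}) (huv : u ≠ v) :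
    ¬ FamIndep M.bases {u, v} := by
  classical
  intro h
  have hc : FamIndep M.bases {c} := hM c
  have hcard : ({c} : Finset (Fin n)).card < ({u, v} : Finset (Fin n)).card := by
    rw [Finset.card_singleton, Finset.card_pair huv]
    omega
  obtain ⟨x, hxJ, hxI, hx⟩ := famIndep_aug M hc h hcard
  rcases Finset.mem_insert.1 hxJ with h1 | h1
  · subst h1
    exact hu (famIndep_subset hx (by intro y hy; simp at hy ⊢; tauto))
  · rw [Finset.mem_singleton] at h1
    subst h1
    exact hv (famIndep_subset hx (by intro y hy; simp at hy ⊢; tauto))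

theorem circuit_pair (M : FinMatroid n r) (hM : M.Loopless) {j k : Fin n} (hjk : j ≠ k)
    (hdep : ¬ FamIndep M.bases {j, k}) : M.IsCircuit {j, k} := by
  classical
  refine ⟨hdep, fun D hD => ?_⟩
  have hcard : D.card < 2 := by
    have := Finset.card_lt_card hD
    rwa [Finset.card_pair hjk] at this
  rcases D.eq_empty_or_nonempty with h | h
  · exact h ▸ famIndep_empty M
  · have h1 := Finset.card_pos.2 h
    obtain ⟨x, hx⟩ := Finset.card_eq_one.1 (by omega : D.card = 1)
    exact hx ▸ hM x

open scoped Classical in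
theorem isFlat_parallel (hM : M.Loopless) (j : Fin n) :
    M.IsFlat (Finset.univ.filter (fun x => x = j ∨ ¬ FamIndep M.bases {x, j})) := by
  classical
  set P := Finset.univ.filter (fun x => x = j ∨ ¬ FamIndep M.bases {x, j}) with hP
  have hmemP : ∀ x, x ∈ P ↔ (x = j ∨ ¬ FamIndep M.bases {x, j}) := by
    intro x; simp [hP]
  intro C hC hcard
  obtain ⟨x, hx⟩ := Finset.card_eq_one.1 hcard
  have hxmem : x ∈ C \ P := hx ▸ Finset.mem_singleton_self x
  rw [Finset.mem_sdiff] at hxmem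
  obtain ⟨hxC, hxP⟩ := hxmem
  rw [hmemP] at hxP
  push_neg at hxP
  obtain ⟨hxj, hxindep⟩ := hxP
  have herase : C.erase x ⊆ P := by
    intro a ha
    rw [Finset.mem_erase] at ha
    by_contra haP
    have : a ∈ C \ P := Finset.mem_sdiff.2 ⟨ha.2, haP⟩
    rw [hx, Finset.mem_singleton] at this
    exact ha.1 this
  have hxPmem : x ∈ P := by
    -- derive x ∈ P for contradiction
    have hcC : 1 ≤ C.card := Finset.card_pos.2 ⟨x, hxC⟩
    rcases Nat.lt_or_ge C.card 2 with h2 | h2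
    · -- C = {x} : contradiction with looplessness
      have : C = {x} := Finset.eq_singleton_iff_unique_mem.2 ⟨hxC, by
        intro y hy
        by_contra hyx
        have : 2 ≤ C.card := Finset.one_lt_card.2 ⟨y, hy, x, hxC, hyx⟩
        omega⟩
      exact absurd (this ▸ hM x) hC.1
    rcases Nat.lt_or_ge C.card 3 with h3 | h3
    · -- C = {a, x}
      have hec : (C.erase x).card = 1 := by
        rw [Finset.card_erase_of_mem hxC]; omega
      obtain ⟨a, ha⟩ := Finset.card_eq_one.1 hec
      have haP : a ∈ P := herase (ha ▸ Finset.mem_singleton_self a)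
      have haC : a ∈ C := Finset.mem_of_mem_erase (ha ▸ Finset.mem_singleton_self a)
      have hax : a ≠ x := Finset.ne_of_mem_erase (ha ▸ Finset.mem_singleton_self a)
      have hCax : C = {a, x} := by
        apply Finset.Subset.antisymm
        · intro y hy
          by_cases hyx : y = x
          · simp [hyx]
          · have : y ∈ C.erase x := Finset.mem_erase.2 ⟨hyx, hy⟩
            rw [ha, Finset.mem_singleton] at this
            simp [this]
        · intro y hy
          rcases Finset.mem_insert.1 hy with h | h
          · exact h ▸ haC
          · rw [Finset.mem_singleton] at h; exact h ▸ hxC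
      have hdepax : ¬ FamIndep M.bases {x, a} := by
        intro hind
        exact hC.1 (by rw [hCax]; exact famIndep_subset hind (by intro y hy; simp at hy ⊢; tauto))
      rw [hmemP a] at haP
      rcases haP with h | h
      · subst h
        exact (hmemP x).2 (Or.inr hdepax)
      · exact (hmemP x).2 (Or.inr (dep_trans hM hdepax (by
          intro hj2
          exact h (famIndep_subset hj2 (by intro y hy; simp at hy ⊢; tauto))) hxj))
    · -- |C| ≥ 3 : two distinct elements of C.erase x, giving a dependent proper subset
      exfalso
      have hec2 : 2 ≤ (C.erase x).card := by
        rw [Finset.card_erase_of_mem hxC]; omega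
      obtain ⟨a, ha, b, hb, hab⟩ := Finset.one_lt_card.1 hec2
      have haP := (hmemP a).1 (herase ha)
      have hbP := (hmemP b).1 (herase hb)
      have hdepab : ¬ FamIndep M.bases {a, b} := by
        rcases haP with h1 | h1
        · subst h1
          rcases hbP with h2 | h2
          · exact absurd h2.symm hab
          · intro hind
            exact h2 (famIndep_subset hind (by intro y hy; simp at hy ⊢; tauto))
        · rcases hbP with h2 | h2
          · subst h2
            intro hind
            exact h1 (famIndep_subset hind (by intro y hy; simp at hy ⊢; tauto))
          · exact dep_trans hM h1 h2 hab
      have hsub : ({a, b} : Finset (Fin n)) ⊂ C := by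
        constructor
        · intro y hy
          rcases Finset.mem_insert.1 hy with h | h
          · exact h ▸ Finset.mem_of_mem_erase ha
          · rw [Finset.mem_singleton] at h
            exact h ▸ Finset.mem_of_mem_erase hb
        · intro hCsub
          have := hCsub hxC
          rcases Finset.mem_insert.1 this with h | h
          · exact (Finset.ne_of_mem_erase ha) h.symm
          · rw [Finset.mem_singleton] at h
            exact (Finset.ne_of_mem_erase hb) h.symm
      exact hdepab (hC.2 _ hsub)
  exact (Finset.mem_sdiff.1 (hx ▸ Finset.mem_singleton_self x)).2 hxPmem

open scoped Classical in
theorem pair_dep_of_mem_closure (hM : M.Loopless) {j k : Fin n}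
    (hk : k ∈ M.closure {j}) (hjk : k ≠ j) : ¬ FamIndep M.bases {k, j} := by
  classical
  have hflat := isFlat_parallel (M := M) hM j
  have hjmem : ({j} : Finset (Fin n)) ⊆ Finset.univ.filter
      (fun x => x = j ∨ ¬ FamIndep M.bases {x, j}) := by
    intro y hy
    rw [Finset.mem_singleton] at hy
    simp [hy]
  have := closure_subset_flat hflat hjmem hk
  rw [Finset.mem_filter] at this
  rcases this.2 with h | h
  · exact absurd h hjk
  · exact h

theorem mem_closure_of_pair_dep {j k : Fin n} (hjk : j ≠ k) (hM : M.Loopless)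
    (hdep : ¬ FamIndep M.bases {j, k}) : k ∈ M.closure {j} := by
  classical
  rw [FinMatroid.closure, Finset.mem_filter]
  refine ⟨Finset.mem_univ _, fun F hF hjF => ?_⟩
  by_contra hkF
  have hjFm : j ∈ F := hjF (Finset.mem_singleton_self j)
  have hCir := circuit_pair M hM hjk hdep
  have : ({j, k} : Finset (Fin n)) \ F = {k} := by
    ext y
    simp only [Finset.mem_sdiff, Finset.mem_insert, Finset.mem_singleton]
    constructor
    · rintro ⟨h1 | h1, h2⟩
      · exact absurd (h1 ▸ hjFm) h2
      · exact h1
    · rintro rfl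
      exact ⟨Or.inr rfl, hkF⟩
  exact hF _ hCir (by rw [this]; simp)

/-- `closure {j}` is an atom in the lattice of flats. -/
theorem flat_atom (hM : M.Loopless) {j : Fin n} {B : Finset (Fin n)}
    (hB : M.IsFlat B) (hBj : B ⊆ M.closure {j}) (hne : B.Nonempty) :
    B = M.closure {j} := by
  classical
  obtain ⟨k, hk⟩ := hne
  refine Finset.Subset.antisymm hBj (closure_subset_flat hB ?_)
  intro j' hj'
  rw [Finset.mem_singleton] at hj'
  rw [hj']
  by_cases hkj : k = j
  · exact hkj ▸ hk
  · have hdep : ¬ FamIndep M.bases {k, j} := pair_dep_of_mem_closure hM (hBj hk) hkj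
    have hdep' : ¬ FamIndep M.bases {j, k} := by
      intro h; exact hdep (famIndep_subset h (by intro y hy; simp at hy ⊢; tauto))
    have hCir := circuit_pair M hM (fun h => hkj h.symm) hdep'
    by_contra hjB
    have : ({j, k} : Finset (Fin n)) \ B = {j} := by
      ext y
      simp only [Finset.mem_sdiff, Finset.mem_insert, Finset.mem_singleton]
      constructor
      · rintro ⟨h1 | h1, h2⟩
        · exact h1
        · exact absurd (h1 ▸ hk) h2
      · rintro rfl
        exact ⟨Or.inl rfl, hjB⟩
    exact hB _ hCir (by rw [this]; simp)

end Flats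
section Partition

open Finset

variable {n r : ℕ} {M : FinMatroid n r}

/-- Helper: sup over `Fin k` of a function vanishing off `i₀` equals its value at `i₀`. -/
theorem sup_single {k : ℕ} (f : Fin k → Finset (Fin n)) (i₀ : Fin k)
    (h : ∀ i, i ≠ i₀ → f i = ∅) : Finset.univ.sup f = f i₀ := by
  apply le_antisymm
  · apply Finset.sup_le
    intro i _
    by_cases hi : i = i₀
    · exact hi ▸ le_refl _
    · rw [h i hi]
      exact bot_le
  · exact Finset.le_sup (Finset.mem_univ i₀)

/-- The partition lemma: the factors of a flat partition it. -/
theorem partition_lemma (hM : M.Loopless) {X : Finset (Fin n)} (hX : M.IsFlat X)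
    {k : ℕ} {g : Fin k → Finset (Fin n)}
    (hgflat : ∀ i, M.IsFlat (g i))
    (hgsub : ∀ i, g i ⊆ X)
    (e : (∀ i : Fin k, {F : Finset (Fin n) // M.IsFlat F ∧ F ⊆ g i}) ≃o
          {F : Finset (Fin n) // M.IsFlat F ∧ F ⊆ X})
    (he : ∀ y, (e y).1 = M.closure (Finset.univ.sup fun i => (y i).1)) :
    (∀ j ∈ X, ∃ i, j ∈ g i) ∧ (∀ j (i i' : Fin k), j ∈ g i → j ∈ g i' → i = i') := by
  classical
  -- single-coordinate tuples
  have mkSingle : ∀ (i₀ : Fin k) (A : Finset (Fin n)), M.IsFlat A → A ⊆ g i₀ →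
      ∃ z : (∀ i : Fin k, {F : Finset (Fin n) // M.IsFlat F ∧ F ⊆ g i}),
        (z i₀).1 = A ∧ (∀ i, i ≠ i₀ → (z i).1 = ∅) ∧ (e z).1 = M.closure A := by
    intro i₀ A hA hAsub
    refine ⟨fun i => if h : i = i₀ then ⟨A, hA, h ▸ hAsub⟩ else ⟨∅, isFlat_empty hM,
      Finset.empty_subset _⟩, by simp, fun i hi => by simp [hi], ?_⟩
    rw [he]
    have hs := sup_single (n := n)
      (fun i => ((if h : i = i₀ then (⟨A, hA, h ▸ hAsub⟩ : {F : Finset (Fin n) // M.IsFlat F ∧ F ⊆ g i}) else ⟨∅, isFlat_empty hM, Finset.empty_subset _⟩) : {F : Finset (Fin n) // M.IsFlat F ∧ F ⊆ g i}).1)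
      i₀ (fun i hi => by simp [hi])
    rw [hs]
    simp
  constructor
  · -- existence
    intro j hj
    by_contra hno
    push_neg at hno
    set A := M.closure {j} with hA
    have hAflat : M.IsFlat A := isFlat_closure
    have hjA : j ∈ A := fm_subset_closure (Finset.mem_singleton_self j)
    have hAX : A ⊆ X := closure_subset_flat hX (Finset.singleton_subset_iff.2 hj)
    set y := e.symm ⟨A, hAflat, hAX⟩ with hy
    have hAeq : A = M.closure (Finset.univ.sup fun i => (y i).1) := by
      have := he y
      rw [hy, OrderIso.apply_symm_apply] at this
      exact this
    -- at least one nonempty coordinate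
    have hex : ∃ i, (y i).1 ≠ ∅ := by
      by_contra hall
      push_neg at hall
      have hsup : (Finset.univ.sup fun i => (y i).1) = ∅ := by
        apply le_antisymm
        · apply Finset.sup_le
          intro i _
          rw [hall i]
        · exact bot_le
      rw [hsup, fm_closure_empty hM] at hAeq
      rw [hAeq] at hjA
      exact absurd hjA (Finset.notMem_empty j)
    obtain ⟨i₁, hi₁⟩ := hex
    -- no second nonempty coordinate
    have huniq : ∀ i, i ≠ i₁ → (y i).1 = ∅ := by
      intro i₂ hi₂
      by_contra hi₂ne
      obtain ⟨z, hz1, hz2, hz3⟩ := mkSingle i₁ (y i₁).1 (y i₁).2.1 (y i₁).2.2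
      have hzy : z ≤ y := by
        intro i
        by_cases hii : i = i₁
        · subst hii
          show (z i).1 ⊆ (y i).1
          rw [hz1]
        · show (z i).1 ⊆ (y i).1
          rw [hz2 i hii]
          exact Finset.empty_subset _
      have hez : (e z) ≤ e y := e.monotone hzy
      have heyA : (e y).1 = A := by
        rw [hy, OrderIso.apply_symm_apply]
      have hsubA : (e z).1 ⊆ A := heyA ▸ hez
      have hclflat : M.IsFlat (e z).1 := (e z).2.1
      have hclne : (e z).1.Nonempty := by
        rw [hz3]
        obtain ⟨a, ha⟩ := Finset.nonempty_iff_ne_empty.2 hi₁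
        exact ⟨a, fm_subset_closure ha⟩
      have : (e z).1 = A := by
        rw [hA]
        exact flat_atom hM hclflat (hA ▸ hsubA) hclne
      have hezy : e z = e y := Subtype.ext (this.trans heyA.symm)
      have : z = y := e.injective hezy
      rw [← this] at hi₂ne
      exact hi₂ne (hz2 i₂ hi₂)
    have hsup : (Finset.univ.sup fun i => (y i).1) = (y i₁).1 :=
      sup_single _ i₁ huniq
    rw [hsup] at hAeq
    have : A ⊆ g i₁ := hAeq ▸ closure_subset_flat (hgflat i₁) (y i₁).2.2
    exact hno i₁ (this hjA)
  · -- uniqueness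
    intro j i i' hji hji'
    by_contra hii
    set A := M.closure {j} with hA
    have hAflat : M.IsFlat A := isFlat_closure
    have hjA : j ∈ A := fm_subset_closure (Finset.mem_singleton_self j)
    have hAi : A ⊆ g i := closure_subset_flat (hgflat i) (Finset.singleton_subset_iff.2 hji)
    have hAi' : A ⊆ g i' := closure_subset_flat (hgflat i') (Finset.singleton_subset_iff.2 hji')
    obtain ⟨z, hz1, hz2, hz3⟩ := mkSingle i A hAflat hAi
    obtain ⟨z', hz1', hz2', hz3'⟩ := mkSingle i' A hAflat hAi'
    have hclA : M.closure A = A := closure_flat_self hAflat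
    have : e z = e z' := Subtype.ext (by rw [hz3, hz3'])
    have hzz : z = z' := e.injective this
    have : A = ∅ := by
      rw [← hz1', ← hzz, hz2 i' (fun h => hii h.symm)]
    rw [this] at hjA
    exact absurd hjA (Finset.notMem_empty j)

end Partition
section Nested

open Finset

variable {n r : ℕ} {M : FinMatroid n r} {𝓖 : Set (Finset (Fin n))}

/-- Two members of `𝓖 ∪ {univ}` that are incomparable and whose join is not in
`𝓖 ∪ {univ}` are disjoint. -/
theorem nested_disjoint (hM : M.Loopless) (h𝓖 : M.IsFlatBuilding 𝓖)
    {G G' : Finset (Fin n)} (hG : G ∈ 𝓖 ∪ {Finset.univ}) (hG' : G' ∈ 𝓖 ∪ {Finset.univ})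
    (hninc : ¬ G ⊆ G') (hninc' : ¬ G' ⊆ G)
    (hjoin : M.closure (G ∪ G') ∉ 𝓖 ∪ {Finset.univ}) {j : Fin n}
    (hj : j ∈ G) (hj' : j ∈ G') : False := by
  classical
  have hGG : G ∈ 𝓖 := by
    rcases hG with h | h
    · exact h
    · exact absurd (h ▸ Finset.subset_univ G' : G' ⊆ G) hninc'
  have hGG' : G' ∈ 𝓖 := by
    rcases hG' with h | h
    · exact h
    · exact absurd (h ▸ Finset.subset_univ G : G ⊆ G') hninc
  have hGflat : M.IsFlat G := (h𝓖.1 G hGG).1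
  have hG'flat : M.IsFlat G' := (h𝓖.1 G' hGG').1
  set Y := M.closure (G ∪ G') with hY
  have hYflat : M.IsFlat Y := isFlat_closure
  have hYne : Y ≠ ∅ := by
    intro h
    have : j ∈ Y := fm_subset_closure (Finset.mem_union_left _ hj)
    rw [h] at this
    exact absurd this (Finset.notMem_empty j)
  obtain ⟨k, g, hginj, hgmem, hgmax, hgsub, e, he⟩ := h𝓖.2 Y hYflat hYne
  have hgflat : ∀ i, M.IsFlat (g i) := fun i => (h𝓖.1 _ (hgmem i).1).1
  have hpart := partition_lemma hM hYflat hgflat (fun i => (hgmem i).2) e he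
  have hGY : G ⊆ Y := (Finset.subset_union_left).trans fm_subset_closure
  have hG'Y : G' ⊆ Y := (Finset.subset_union_right).trans fm_subset_closure
  obtain ⟨a, ha⟩ := hgsub G hGG hGY
  obtain ⟨b, hb⟩ := hgsub G' hGG' hG'Y
  have hab : a = b := hpart.2 j a b (ha hj) (hb hj')
  subst hab
  have hsub : G ∪ G' ⊆ g a := Finset.union_subset ha hb
  have hYga : Y = g a := by
    apply Finset.Subset.antisymm
    · exact closure_subset_flat (hgflat a) hsub
    · exact (hgmem a).2
  exact hjoin (Or.inl (hYga ▸ (hgmem a).1))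

/-- The union of a pairwise-incomparable subfamily of a nested set is a flat. -/
theorem unionFlat (hM : M.Loopless) (h𝓖 : M.IsFlatBuilding 𝓖)
    {T : Finset (Finset (Fin n))} (hT𝓖 : ↑T ⊆ 𝓖 ∪ {Finset.univ})
    (hanti : ∀ A ∈ T, ∀ B ∈ T, A ≠ B → ¬ A ⊆ B ∧ ¬ B ⊆ A)
    (hnest : ∀ T' ⊆ T, 2 ≤ T'.card →
      (∀ A ∈ T', ∀ B ∈ T', A ≠ B → ¬ A ⊆ B ∧ ¬ B ⊆ A) →
      M.closure (T'.sup id) ∉ 𝓖 ∪ {Finset.univ}) :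
    M.IsFlat (T.sup id) := by
  classical
  rcases Nat.lt_or_ge T.card 2 with hc | hc
  · rcases Nat.lt_or_ge T.card 1 with hc0 | hc1
    · have : T = ∅ := Finset.card_eq_zero.1 (by omega)
      rw [this]
      simpa using isFlat_empty hM
    · obtain ⟨G, hG⟩ := Finset.card_eq_one.1 (by omega : T.card = 1)
      rw [hG, Finset.sup_singleton]
      rcases hT𝓖 (by rw [hG]; exact Finset.mem_singleton_self G) with h | h
      · exact (h𝓖.1 _ h).1
      · exact h ▸ isFlat_univ
  -- main case : at least two elements
  have hTG : ∀ G ∈ T, G ∈ 𝓖 := by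
    intro G hG
    rcases hT𝓖 hG with h | h
    · exact h
    · exfalso
      obtain ⟨G', hG', hGG'⟩ := Finset.exists_mem_ne (show 1 < T.card by omega) G
      exact (hanti G' hG' G hG hGG').1 (h ▸ Finset.subset_univ G')
  have hTflat : ∀ G ∈ T, M.IsFlat G := fun G hG => (h𝓖.1 G (hTG G hG)).1
  have hTne : ∀ G ∈ T, G ≠ ∅ := fun G hG => (h𝓖.1 G (hTG G hG)).2
  set Y := M.closure (T.sup id) with hY
  have hYflat : M.IsFlat Y := isFlat_closure
  obtain ⟨G₀, hG₀⟩ := Finset.card_pos.1 (by omega : 0 < T.card)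
  have hYne : Y ≠ ∅ := by
    intro h
    obtain ⟨x, hx⟩ := Finset.nonempty_iff_ne_empty.2 (hTne G₀ hG₀)
    have : x ∈ Y := fm_subset_closure (Finset.mem_sup.2 ⟨G₀, hG₀, hx⟩)
    rw [h] at this
    exact absurd this (Finset.notMem_empty x)
  obtain ⟨k, g, hginj, hgmem, hgmax, hgsub, e, he⟩ := h𝓖.2 Y hYflat hYne
  have hgflat : ∀ i, M.IsFlat (g i) := fun i => (h𝓖.1 _ (hgmem i).1).1
  have hpart := partition_lemma hM hYflat hgflat (fun i => (hgmem i).2) e he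
  have hTY : ∀ G ∈ T, G ⊆ Y := fun G hG =>
    (Finset.le_sup (f := id) hG : G ⊆ T.sup id).trans fm_subset_closure
  -- the grouped flats
  set Z : Fin k → Finset (Fin n) := fun i => M.closure ((T.filter (· ⊆ g i)).sup id) with hZ
  have hZflat : ∀ i, M.IsFlat (Z i) := fun i => isFlat_closure
  have hZsub : ∀ i, Z i ⊆ g i := by
    intro i
    apply closure_subset_flat (hgflat i)
    intro x hx
    obtain ⟨G, hG, hxG⟩ := Finset.mem_sup.1 hx
    exact (Finset.mem_filter.1 hG).2 hxG
  have hZY : ∀ i, Z i ⊆ Y := fun i => (hZsub i).trans (hgmem i).2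
  -- e of the Z-tuple and the g-tuple both equal Y
  set ζ : ∀ i : Fin k, {F : Finset (Fin n) // M.IsFlat F ∧ F ⊆ g i} :=
    fun i => ⟨Z i, hZflat i, hZsub i⟩ with hζ
  set γ : ∀ i : Fin k, {F : Finset (Fin n) // M.IsFlat F ∧ F ⊆ g i} :=
    fun i => ⟨g i, hgflat i, Finset.Subset.refl _⟩ with hγ
  have heγ : (e γ) = ⟨Y, hYflat, Finset.Subset.refl Y⟩ := by
    have htop : ∀ b, b ≤ e γ := by
      intro b
      have : e.symm b ≤ γ := by
        intro i
        exact ((e.symm b) i).2.2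
      have := e.monotone this
      rwa [OrderIso.apply_symm_apply] at this
    apply le_antisymm
    · exact (e γ).2.2
    · exact htop ⟨Y, hYflat, Finset.Subset.refl Y⟩
  have heζ : (e ζ) = ⟨Y, hYflat, Finset.Subset.refl Y⟩ := by
    apply Subtype.ext
    show (e ζ).1 = Y
    have hiG : ∀ G ∈ T, ∃ i, G ⊆ g i := fun G hG => hgsub G (hTG G hG) (hTY G hG)
    rw [he]
    apply Finset.Subset.antisymm
    · apply closure_subset_flat hYflat
      intro x hx
      obtain ⟨i, _, hxi⟩ := Finset.mem_sup.1 hx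
      exact hZY i hxi
    · -- Y ⊆ closure (sup Z)
      apply closure_subset_flat isFlat_closure
      intro x hx
      obtain ⟨G, hG, hxG⟩ := Finset.mem_sup.1 hx
      obtain ⟨i, hi⟩ := hiG G hG
      have h1 : G ⊆ Z i := by
        refine Finset.Subset.trans ?_ (fm_subset_closure (M := M))
        intro y hy
        exact Finset.mem_sup.2 ⟨G, Finset.mem_filter.2 ⟨hG, hi⟩, hy⟩
      apply fm_subset_closure
      exact Finset.mem_sup.2 ⟨i, Finset.mem_univ i, (h1 hxG : x ∈ (ζ i).1)⟩
  have hζγ : ζ = γ := e.injective (heζ.trans heγ.symm)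
  have hZg : ∀ i, Z i = g i := by
    intro i
    have := congrFun hζγ i
    exact congrArg Subtype.val this
  have hgT : ∀ i, g i ∈ T := by
    intro i
    set Ti := T.filter (· ⊆ g i) with hTi
    rcases Nat.lt_or_ge Ti.card 2 with hci | hci
    · rcases Nat.lt_or_ge Ti.card 1 with hc0 | hc1
      · exfalso
        have hTiem : Ti = ∅ := Finset.card_eq_zero.1 (by omega)
        have : Z i = ∅ := by
          rw [hZ]
          show M.closure (Ti.sup id) = ∅
          rw [hTiem, Finset.sup_empty]
          exact fm_closure_empty hM
        exact (h𝓖.1 _ (hgmem i).1).2 ((hZg i).symm.trans this ▸ rfl)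
      · obtain ⟨Gi, hGi⟩ := Finset.card_eq_one.1 (by omega : Ti.card = 1)
        have hGiT : Gi ∈ T := by
          have : Gi ∈ Ti := hGi ▸ Finset.mem_singleton_self Gi
          exact Finset.mem_of_mem_filter _ this
        have : g i = Gi := by
          rw [← hZg i, hZ]
          show M.closure (Ti.sup id) = Gi
          rw [hGi, Finset.sup_singleton]
          exact closure_flat_self (hTflat Gi hGiT)
        exact this ▸ hGiT
    · exfalso
      have hanti' : ∀ A ∈ Ti, ∀ B ∈ Ti, A ≠ B → ¬ A ⊆ B ∧ ¬ B ⊆ A := by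
        intro A hA B hB hAB
        exact hanti A (Finset.mem_of_mem_filter _ hA) B (Finset.mem_of_mem_filter _ hB) hAB
      have := hnest Ti (Finset.filter_subset _ _) hci hanti'
      apply this
      have : M.closure (Ti.sup id) = g i := hZg i
      rw [this]
      exact Or.inl (hgmem i).1
  have hfin : T.sup id = Y := by
    apply Finset.Subset.antisymm
    · exact fm_subset_closure
    · intro j hj
      obtain ⟨i, hi⟩ := hpart.1 j hj
      exact Finset.mem_sup.2 ⟨g i, hgT i, hi⟩
  rw [hfin]
  exact hYflat

end Nested
section Telescope

open Finset

/-- Telescoping: any element of a finite set of reals is the minimum plus the sum of the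
gaps up to it. -/
theorem telescope_sum : ∀ (T : Finset ℝ) (m : ℝ), m ∈ T → (∀ u ∈ T, m ≤ u) →
    ∀ x ∈ T, x = m + ∑ v ∈ T.filter (fun v => m < v ∧ v ≤ x),
      (v - ((T.filter (· < v)).max.unbotD 0)) := by
  classical
  intro T
  induction T using Finset.strongInduction with
  | _ T ih =>
    intro m hm hmin x hx
    have hTne : T.Nonempty := ⟨m, hm⟩
    set Mx := T.max' hTne with hMx
    by_cases hMm : Mx ≤ m
    · -- all elements equal m
      have hxm : x = m := le_antisymm ((Finset.le_max' T x hx).trans hMm) (hmin x hx)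
      have hfe : T.filter (fun v => m < v ∧ v ≤ x) = ∅ := by
        apply Finset.filter_false_of_mem
        intro v hv
        rintro ⟨h1, h2⟩
        exact absurd ((Finset.le_max' T v hv).trans hMm) (not_le.2 h1)
      rw [hfe, Finset.sum_empty, hxm, add_zero]
    · push_neg at hMm
      set T' := T.erase Mx with hT'
      have hMxT : Mx ∈ T := Finset.max'_mem T hTne
      have hmT' : m ∈ T' := Finset.mem_erase.2 ⟨fun h => absurd (h ▸ hMm) (lt_irrefl m), hm⟩
      have hminT' : ∀ u ∈ T', m ≤ u := fun u hu => hmin u (Finset.mem_of_mem_erase hu)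
      have hT'lt : ∀ u ∈ T', u < Mx := fun u hu =>
        lt_of_le_of_ne (Finset.le_max' T u (Finset.mem_of_mem_erase hu))
          (Finset.ne_of_mem_erase hu)
      have hss : T' ⊂ T := Finset.erase_ssubset hMxT
      have hpred_eq : ∀ v : ℝ, v ≤ Mx → T.filter (· < v) = T'.filter (· < v) := by
        intro v hv
        ext u
        rw [Finset.mem_filter, Finset.mem_filter, hT', Finset.mem_erase]
        constructor
        · rintro ⟨h1, h2⟩
          exact ⟨⟨fun h => absurd (h ▸ hv) (not_le.2 (h ▸ h2 : Mx < v) |>.elim), h1⟩, h2⟩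
        · rintro ⟨⟨_, h1⟩, h2⟩
          exact ⟨h1, h2⟩
      by_cases hxM : x = Mx
      · -- x is the maximum
        subst hxM
        have hm' : T'.Nonempty := ⟨m, hmT'⟩
        set m' := T'.max' hm' with hm'def
        have hm'T' : m' ∈ T' := Finset.max'_mem T' hm'
        have hfilter1 : T.filter (fun v => m < v ∧ v ≤ Mx) =
            insert Mx (T'.filter (fun v => m < v)) := by
          ext v
          rw [Finset.mem_filter, Finset.mem_insert, Finset.mem_filter, hT', Finset.mem_erase]
          constructor
          · rintro ⟨h1, h2, h3⟩
            by_cases hv : v = Mx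
            · exact Or.inl hv
            · exact Or.inr ⟨⟨hv, h1⟩, h2⟩
          · rintro (h | ⟨⟨h1, h2⟩, h3⟩)
            · exact ⟨h ▸ hMxT, h ▸ hMm, h ▸ le_refl _⟩
            · exact ⟨h2, h3, Finset.le_max' T v h2⟩
        have hMxnotin : Mx ∉ T'.filter (fun v => m < v) := by
          intro h
          exact absurd rfl (Finset.ne_of_mem_erase (Finset.mem_of_mem_filter _ h))
        have hpredMx : (T.filter (· < Mx)).max.unbotD 0 = m' := by
          have h1 : T.filter (· < Mx) = T' := by
            ext u
            rw [Finset.mem_filter, hT', Finset.mem_erase]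
            constructor
            · rintro ⟨h1, h2⟩
              exact ⟨ne_of_lt h2, h1⟩
            · rintro ⟨h1, h2⟩
              exact ⟨h2, lt_of_le_of_ne (Finset.le_max' T u h2) h1⟩
          rw [h1, ← Finset.coe_max' hm']
          rfl
        have hih := ih T' hss m hmT' hminT' m' hm'T'
        have hfilter2 : T'.filter (fun v => m < v ∧ v ≤ m') = T'.filter (fun v => m < v) := by
          apply Finset.filter_congr
          intro v hv
          simp only [and_iff_left_iff_imp]
          intro _
          exact Finset.le_max' T' v hv
        rw [hfilter2] at hih
        have hsum_eq : ∑ v ∈ T'.filter (fun v => m < v),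
            (v - ((T'.filter (· < v)).max.unbotD 0)) =
            ∑ v ∈ T'.filter (fun v => m < v), (v - ((T.filter (· < v)).max.unbotD 0)) := by
          apply Finset.sum_congr rfl
          intro v hv
          rw [hpred_eq v (le_of_lt (hT'lt v (Finset.mem_of_mem_filter _ hv)))]
        rw [hsum_eq] at hih
        rw [hfilter1, Finset.sum_insert hMxnotin, hpredMx]
        have : Mx - m' + (m' - m) = Mx - m := by ring
        linarith [hih]
      · -- x < Mx : drop the maximum
        have hxT' : x ∈ T' := Finset.mem_erase.2 ⟨hxM, hx⟩
        have hxlt : x < Mx := hT'lt x hxT'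
        have hfilter : T.filter (fun v => m < v ∧ v ≤ x) =
            T'.filter (fun v => m < v ∧ v ≤ x) := by
          ext v
          rw [Finset.mem_filter, Finset.mem_filter, hT', Finset.mem_erase]
          constructor
          · rintro ⟨h1, h2, h3⟩
            refine ⟨⟨fun h => ?_, h1⟩, h2, h3⟩
            rw [h] at h3
            exact absurd (h3.trans_lt hxlt) (lt_irrefl Mx)
          · rintro ⟨⟨h1, h2⟩, h3⟩
            exact ⟨h2, h3⟩
        have hih := ih T' hss m hmT' hminT' x hxT'
        have hsum_eq : ∑ v ∈ T'.filter (fun v => m < v ∧ v ≤ x),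
            (v - ((T'.filter (· < v)).max.unbotD 0)) =
            ∑ v ∈ T'.filter (fun v => m < v ∧ v ≤ x),
            (v - ((T.filter (· < v)).max.unbotD 0)) := by
          apply Finset.sum_congr rfl
          intro v hv
          rw [hpred_eq v (le_of_lt (hT'lt v (Finset.mem_of_mem_filter _ hv)))]
        rw [hfilter, ← hsum_eq]
        exact hih

end Telescope
section Backward

open Finset

variable {n r : ℕ} {M : FinMatroid n r} {𝓖 : Set (Finset (Fin n))}

theorem chain_of_common (hM : M.Loopless) (h𝓖 : M.IsFlatBuilding 𝓖)
    {S : Finset (Finset (Fin n))} (hN : M.IsNested (𝓖 ∪ {Finset.univ}) S)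
    {G G' : Finset (Fin n)} (hG : G ∈ S) (hG' : G' ∈ S) {x : Fin n}
    (hx : x ∈ G) (hx' : x ∈ G') : G ⊆ G' ∨ G' ⊆ G := by
  classical
  by_contra h
  push_neg at h
  obtain ⟨h1, h2⟩ := h
  have hne : G ≠ G' := fun hEq => h1 (hEq ▸ Finset.Subset.refl G)
  have hpair : ({G, G'} : Finset (Finset (Fin n))) ⊆ S := by
    intro A hA
    rcases Finset.mem_insert.1 hA with hAe | hAe
    · exact hAe ▸ hG
    · exact (Finset.mem_singleton.1 hAe) ▸ hG'
  have hcard : 2 ≤ ({G, G'} : Finset (Finset (Fin n))).card := by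
    rw [Finset.card_pair hne]
  have hanti : ∀ A ∈ ({G, G'} : Finset (Finset (Fin n))),
      ∀ B ∈ ({G, G'} : Finset (Finset (Fin n))), A ≠ B → ¬ A ⊆ B ∧ ¬ B ⊆ A := by
    intro A hA B hB hAB
    rcases Finset.mem_insert.1 hA with hAe | hAe <;>
      rcases Finset.mem_insert.1 hB with hBe | hBe
    · exact absurd (hAe.trans hBe.symm) hAB
    · rw [Finset.mem_singleton] at hBe
      subst hAe; subst hBe
      exact ⟨h1, h2⟩
    · rw [Finset.mem_singleton] at hAe
      subst hAe; subst hBe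
      exact ⟨h2, h1⟩
    · rw [Finset.mem_singleton] at hAe hBe
      exact absurd (hAe.trans hBe.symm) hAB
  have hjoin := hN.2 _ hpair hcard hanti
  have hsup : ({G, G'} : Finset (Finset (Fin n))).sup id = G ∪ G' := by
    rw [Finset.sup_insert, Finset.sup_singleton]
    rfl
  rw [hsup] at hjoin
  exact nested_disjoint hM h𝓖 (hN.1 hG) (hN.1 hG') h1 h2 hjoin hx hx'

theorem bergman_of_nested (hM : M.Loopless) (h𝓖 : M.IsFlatBuilding 𝓖)
    {S : Finset (Finset (Fin n))} {c : Finset (Fin n) → ℝ} {lam : ℝ}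
    (hN : M.IsNested (𝓖 ∪ {Finset.univ}) S) (hc : ∀ G ∈ S, 0 ≤ c G)
    {w : Fin n → ℝ} (hw : w = fun i => lam + ∑ G ∈ S, c G * indVec G i) :
    M.InBergmanFan w := by
  classical
  -- the weight above `lam`
  set σx : Fin n → ℝ := fun x => ∑ G ∈ S.filter (fun G => x ∈ G), c G with hσx
  have hwx : ∀ x, w x = lam + σx x := by
    intro x
    rw [hw, hσx]
    simp only
    congr 1
    rw [Finset.sum_filter]
    apply Finset.sum_congr rfl
    intro G _
    simp only [indVec]
    by_cases h : x ∈ G <;> simp [h]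
  have hσnonneg : ∀ x, 0 ≤ σx x := by
    intro x
    apply Finset.sum_nonneg
    intro G hG
    exact hc G (Finset.mem_of_mem_filter _ hG)
  -- every strict upper level set is a flat
  have hlevel : ∀ t : ℝ, M.IsFlat (Finset.univ.filter (fun x => t < w x)) := by
    intro t
    set s := t - lam with hs
    have hiff : ∀ x, (t < w x) ↔ (s < σx x) := by
      intro x
      rw [hwx x, hs]
      constructor <;> intro h <;> linarith
    have hset : Finset.univ.filter (fun x => t < w x) =
        Finset.univ.filter (fun x => s < σx x) := by
      apply Finset.filter_congr
      intro x _
      simp only [hiff x]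
    rw [hset]
    rcases lt_or_ge s 0 with hneg | hpos
    · have : Finset.univ.filter (fun x => s < σx x) = Finset.univ := by
        apply Finset.filter_true_of_mem
        intro x _
        exact lt_of_lt_of_le hneg (hσnonneg x)
      rw [this]
      exact isFlat_univ
    · -- union of the maximal elements of 𝒜
      set σ : Finset (Fin n) → ℝ := fun G => ∑ H ∈ S.filter (fun H => G ⊆ H), c H with hσ
      set 𝒜 := S.filter (fun G => s < σ G) with h𝒜
      set T := 𝒜.filter (fun G => ∀ H ∈ 𝒜, G ⊆ H → G = H) with hT
      have hTanti : ∀ A ∈ T, ∀ B ∈ T, A ≠ B → ¬ A ⊆ B ∧ ¬ B ⊆ A := by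
        intro A hA B hB hAB
        rw [hT, Finset.mem_filter] at hA hB
        constructor
        · intro hsub
          exact hAB (hA.2 B hB.1 hsub)
        · intro hsub
          exact hAB.symm (hB.2 A hA.1 hsub)
      have hTS : T ⊆ S := fun G hG =>
        Finset.mem_of_mem_filter _ (Finset.mem_of_mem_filter _ hG)
      have hunion : Finset.univ.filter (fun x => s < σx x) = T.sup id := by
        apply Finset.Subset.antisymm
        · intro x hx
          rw [Finset.mem_filter] at hx
          obtain ⟨_, hxs⟩ := hx
          -- the members of S containing x form a chain; take the minimal one
          set Sx := S.filter (fun G => x ∈ G) with hSx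
          have hSxne : Sx.Nonempty := by
            rw [Finset.nonempty_iff_ne_empty]
            intro h
            have hxs' : s < ∑ G ∈ Sx, c G := hxs
            rw [h, Finset.sum_empty] at hxs'
            exact absurd hxs' (not_lt.2 hpos)
          obtain ⟨G₀, hG₀, hG₀min⟩ : ∃ G₀ ∈ Sx, ∀ H ∈ Sx, ¬ H < G₀ := by
            obtain ⟨i, hi, hmin⟩ := Finset.exists_minimal hSxne
            exact ⟨i, hi, fun x hx hlt => hlt.not_ge (hmin hx hlt.le)⟩
          have hG₀S : G₀ ∈ S := Finset.mem_of_mem_filter _ hG₀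
          have hxG₀ : x ∈ G₀ := (Finset.mem_filter.1 hG₀).2
          have hG₀sub : ∀ H ∈ Sx, G₀ ⊆ H := by
            intro H hH
            have hHS : H ∈ S := Finset.mem_of_mem_filter _ hH
            have hxH : x ∈ H := (Finset.mem_filter.1 hH).2
            rcases chain_of_common hM h𝓖 hN hG₀S hHS hxG₀ hxH with h | h
            · exact h
            · have : ¬ H < G₀ := hG₀min H hH
              have := Finset.Subset.antisymm h (by
                by_contra hcon
                exact this (lt_of_le_of_ne h (fun hEq => hcon (hEq ▸ Finset.Subset.refl _))))
              exact this ▸ Finset.Subset.refl _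
          have hsets : S.filter (fun H => G₀ ⊆ H) = S.filter (fun G => x ∈ G) := by
            ext H
            rw [Finset.mem_filter, Finset.mem_filter]
            constructor
            · rintro ⟨h1, h2⟩
              exact ⟨h1, h2 hxG₀⟩
            · rintro ⟨h1, h2⟩
              exact ⟨h1, hG₀sub H (Finset.mem_filter.2 ⟨h1, h2⟩)⟩
          have hσG₀ : σ G₀ = σx x := Finset.sum_congr hsets (fun _ _ => rfl)
          have hG₀𝒜 : G₀ ∈ 𝒜 := Finset.mem_filter.2 ⟨hG₀S, by rw [hσG₀]; exact hxs⟩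
          -- find a maximal element of 𝒜 above G₀
          set 𝒜f := 𝒜.filter (fun G => G₀ ⊆ G) with h𝒜f
          have h𝒜fne : 𝒜f.Nonempty := ⟨G₀, Finset.mem_filter.2 ⟨hG₀𝒜, Finset.Subset.refl _⟩⟩
          obtain ⟨Gm, hGm, hGmmax⟩ : ∃ Gm ∈ 𝒜f, ∀ H ∈ 𝒜f, ¬ Gm < H := by
              obtain ⟨i, hi, hmax⟩ := Finset.exists_maximal h𝒜fne
              exact ⟨i, hi, fun x hx hlt => hlt.not_ge (hmax hx hlt.le)⟩
          have hGm𝒜 : Gm ∈ 𝒜 := Finset.mem_of_mem_filter _ hGm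
          have hG₀Gm : G₀ ⊆ Gm := (Finset.mem_filter.1 hGm).2
          have hGmT : Gm ∈ T := by
            rw [hT, Finset.mem_filter]
            refine ⟨hGm𝒜, fun H hH hGmH => ?_⟩
            have hH𝒜f : H ∈ 𝒜f := Finset.mem_filter.2 ⟨hH, hG₀Gm.trans hGmH⟩
            by_contra hne
            exact hGmmax H hH𝒜f (lt_of_le_of_ne hGmH hne)
          exact Finset.mem_sup.2 ⟨Gm, hGmT, hG₀Gm hxG₀⟩
        · intro x hx
          obtain ⟨G, hGT, hxG⟩ := Finset.mem_sup.1 hx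
          rw [Finset.mem_filter]
          refine ⟨Finset.mem_univ _, ?_⟩
          have hG𝒜 : G ∈ 𝒜 := Finset.mem_of_mem_filter _ hGT
          have hσG : s < σ G := (Finset.mem_filter.1 hG𝒜).2
          refine lt_of_lt_of_le hσG ?_
          rw [hσ, hσx]
          apply Finset.sum_le_sum_of_subset_of_nonneg
          · intro H hH
            rw [Finset.mem_filter] at hH ⊢
            exact ⟨hH.1, hH.2 hxG⟩
          · intro H hH _
            exact hc H (Finset.mem_of_mem_filter _ hH)
      rw [hunion]
      exact unionFlat hM h𝓖 (fun G hG => hN.1 (hTS hG)) hTanti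
        (fun T' hT' h2 hanti => hN.2 T' (hT'.trans hTS) h2 hanti)
  -- conclude: on every circuit the minimum is attained twice
  intro C hC
  have hCne : C.Nonempty := by
    rw [Finset.nonempty_iff_ne_empty]
    intro h
    exact hC.1 (h ▸ famIndep_empty M)
  obtain ⟨k₀, hk₀C, hk₀min⟩ := Finset.exists_min_image C w hCne
  by_contra hcon
  push_neg at hcon
  have hunique : ∀ j ∈ C, j ≠ k₀ → w k₀ < w j := by
    intro j hj hjk
    rcases lt_or_eq_of_le (hk₀min j hj) with h | h
    · exact h
    · exfalso
      obtain ⟨k, hkC, hklt⟩ := hcon k₀ hk₀C j hj (fun hEq => hjk hEq.symm) h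
      exact absurd (hk₀min k hkC) (not_le.2 hklt)
  have hF := hlevel (w k₀)
  apply hF C hC
  have : C \ Finset.univ.filter (fun x => w k₀ < w x) = {k₀} := by
    ext y
    rw [Finset.mem_sdiff, Finset.mem_filter, Finset.mem_singleton]
    constructor
    · rintro ⟨hyC, hy⟩
      push_neg at hy
      by_contra hyk
      exact absurd (hunique y hyC hyk) (not_lt.2 (hy (Finset.mem_univ y)))
    · rintro rfl
      exact ⟨hk₀C, fun h => absurd h.2 (lt_irrefl _)⟩
  rw [this]
  simp

end Backward
section Forward

open Finset

variable {n r : ℕ} {M : FinMatroid n r} {𝓖 : Set (Finset (Fin n))}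

theorem nested_of_bergman (hM : M.Loopless) (h𝓖 : M.IsFlatBuilding 𝓖)
    {w : Fin n → ℝ} (hB : M.InBergmanFan w) :
    ∃ S : Finset (Finset (Fin n)),
      M.IsNested (𝓖 ∪ {Finset.univ}) S ∧
      ∃ (c : Finset (Fin n) → ℝ) (lam : ℝ),
        (∀ G ∈ S, 0 ≤ c G) ∧
        w = fun i => lam + ∑ G ∈ S, c G * indVec G i := by
  classical
  rcases Nat.eq_zero_or_pos n with hn | hn
  · -- trivial case n = 0
    refine ⟨∅, ⟨by simp, fun T hT h2 _ => ?_⟩, fun _ => 0, 0, by simp, ?_⟩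
    · have : T = ∅ := Finset.subset_empty.1 hT
      rw [this] at h2
      simp at h2
    · funext i
      exact absurd i.2 (by omega)
  have : NeZero n := ⟨by omega⟩
  -- the distinct values of w
  set D : Finset ℝ := Finset.univ.image w with hD
  have hDne : D.Nonempty := ⟨w ⟨0, hn⟩, Finset.mem_image_of_mem w (Finset.mem_univ _)⟩
  set m := D.min' hDne with hm
  set predv : ℝ → ℝ := fun v => ((D.filter (· < v)).max.unbotD 0) with hpredv
  set cv : ℝ → ℝ := fun v => v - predv v with hcv
  set Λ := D.filter (fun v => m < v) with hΛ
  set Fv : ℝ → Finset (Fin n) := fun v => Finset.univ.filter (fun j => v ≤ w j) with hFv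
  -- level sets are flats
  have hlev : ∀ v : ℝ, M.IsFlat (Fv v) := by
    intro v C hC hcard
    obtain ⟨x, hx⟩ := Finset.card_eq_one.1 hcard
    have hxmem : x ∈ C \ Fv v := hx ▸ Finset.mem_singleton_self x
    rw [Finset.mem_sdiff] at hxmem
    obtain ⟨hxC, hxF⟩ := hxmem
    have hwx : w x < v := by
      by_contra h
      exact hxF (Finset.mem_filter.2 ⟨Finset.mem_univ _, not_lt.1 h⟩)
    obtain ⟨i, hiC, j, hjC, hij, hwij, hmin⟩ := hB C hC
    have hiF : i ∈ C \ Fv v := by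
      rw [Finset.mem_sdiff]
      refine ⟨hiC, fun h => ?_⟩
      have : v ≤ w i := (Finset.mem_filter.1 h).2
      exact absurd ((hmin x hxC).trans_lt hwx) (not_lt.2 this)
    have hjF : j ∈ C \ Fv v := by
      rw [Finset.mem_sdiff]
      refine ⟨hjC, fun h => ?_⟩
      have : v ≤ w j := (Finset.mem_filter.1 h).2
      rw [← hwij] at this
      exact absurd ((hmin x hxC).trans_lt hwx) (not_lt.2 this)
    rw [hx, Finset.mem_singleton] at hiF hjF
    exact hij (hiF.trans hjF.symm)
  -- properties of the level sets for values in D and Λ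
  have hFvne : ∀ v ∈ D, Fv v ≠ ∅ := by
    intro v hv
    obtain ⟨i, _, hi⟩ := Finset.mem_image.1 hv
    intro h
    have : i ∈ Fv v := Finset.mem_filter.2 ⟨Finset.mem_univ _, le_of_eq hi.symm⟩
    rw [h] at this
    exact absurd this (Finset.notMem_empty i)
  obtain ⟨j₀, _, hj₀⟩ := Finset.mem_image.1 (Finset.min'_mem D hDne)
  have hFvproper : ∀ v ∈ Λ, Fv v ≠ Finset.univ := by
    intro v hv h
    have hj₀F : j₀ ∈ Fv v := h ▸ Finset.mem_univ j₀
    have : v ≤ w j₀ := (Finset.mem_filter.1 hj₀F).2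
    rw [hj₀] at this
    exact absurd ((Finset.mem_filter.1 hv).2.trans_le this) (lt_irrefl _)
  have hFvanti : ∀ v v' : ℝ, v ≤ v' → Fv v' ⊆ Fv v := by
    intro v v' hvv' j hj
    rw [Finset.mem_filter] at hj ⊢
    exact ⟨hj.1, hvv'.trans hj.2⟩
  -- choose building data for each nonempty flat
  choose bk bg binj bmem bmax bsub be bhe using h𝓖.2
  set fac : Finset (Fin n) → Finset (Finset (Fin n)) := fun F =>
    if h : M.IsFlat F ∧ F ≠ ∅ then Finset.image (bg F h.1 h.2) Finset.univ else ∅ with hfac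
  have hfac_eq : ∀ F (h : M.IsFlat F ∧ F ≠ ∅),
      fac F = Finset.image (bg F h.1 h.2) Finset.univ := by
    intro F h
    rw [hfac]
    simp only [dif_pos h]
  -- the partition of each level set by its factors
  have hpartF : ∀ v ∈ Λ, ∀ (h : M.IsFlat (Fv v) ∧ Fv v ≠ ∅),
      (∀ j ∈ Fv v, ∃ i, j ∈ bg (Fv v) h.1 h.2 i) ∧
      (∀ j i i', j ∈ bg (Fv v) h.1 h.2 i → j ∈ bg (Fv v) h.1 h.2 i' → i = i') := by
    intro v _ h
    exact partition_lemma hM h.1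
      (fun i => (h𝓖.1 _ (bmem (Fv v) h.1 h.2 i).1).1)
      (fun i => (bmem (Fv v) h.1 h.2 i).2)
      (be (Fv v) h.1 h.2) (bhe (Fv v) h.1 h.2)
  -- the indicator identity for each level set
  have hind : ∀ v ∈ Λ, ∀ j, ∑ G ∈ fac (Fv v), indVec G j = indVec (Fv v) j := by
    intro v hv j
    have hflatne : M.IsFlat (Fv v) ∧ Fv v ≠ ∅ :=
      ⟨hlev v, hFvne v (Finset.mem_of_mem_filter _ hv)⟩
    rw [hfac_eq (Fv v) hflatne]
    rw [Finset.sum_image (fun x _ y _ hxy => binj (Fv v) hflatne.1 hflatne.2 hxy)]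
    obtain ⟨hex, huniq⟩ := hpartF v hv hflatne
    by_cases hj : j ∈ Fv v
    · obtain ⟨i₀, hi₀⟩ := hex j hj
      have h1 : ∀ i, indVec (bg (Fv v) hflatne.1 hflatne.2 i) j = if i = i₀ then 1 else 0 := by
        intro i
        simp only [indVec]
        by_cases h : j ∈ bg (Fv v) hflatne.1 hflatne.2 i
        · rw [if_pos h, if_pos (huniq j i i₀ h hi₀)]
        · rw [if_neg h, if_neg (fun hEq => h (by rw [hEq]; exact hi₀))]
      rw [Finset.sum_congr rfl (fun i _ => h1 i)]
      rw [Finset.sum_ite_eq' Finset.univ i₀ (fun _ => (1 : ℝ))]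
      simp [indVec, hj]
    · have h1 : ∀ i, indVec (bg (Fv v) hflatne.1 hflatne.2 i) j = 0 := by
        intro i
        simp only [indVec]
        rw [if_neg (fun h => hj ((bmem (Fv v) hflatne.1 hflatne.2 i).2 h))]
      rw [Finset.sum_congr rfl (fun i _ => h1 i)]
      simp [indVec, hj]
  -- the nested family and coefficients
  set S : Finset (Finset (Fin n)) := Λ.biUnion (fun v => fac (Fv v)) with hS
  set c : Finset (Fin n) → ℝ := fun G => ∑ v ∈ Λ.filter (fun v => G ∈ fac (Fv v)), cv v
    with hc
  have hmemS : ∀ G, G ∈ S ↔ ∃ v ∈ Λ, G ∈ fac (Fv v) := by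
    intro G
    rw [hS, Finset.mem_biUnion]
  have hS𝓖 : ∀ G ∈ S, G ∈ 𝓖 := by
    intro G hG
    obtain ⟨v, hv, hGv⟩ := (hmemS G).1 hG
    have hflatne : M.IsFlat (Fv v) ∧ Fv v ≠ ∅ :=
      ⟨hlev v, hFvne v (Finset.mem_of_mem_filter _ hv)⟩
    rw [hfac_eq (Fv v) hflatne] at hGv
    obtain ⟨i, _, hi⟩ := Finset.mem_image.1 hGv
    exact hi ▸ (bmem (Fv v) hflatne.1 hflatne.2 i).1
  have hfacsub : ∀ v ∈ Λ, ∀ G ∈ fac (Fv v), G ⊆ Fv v := by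
    intro v hv G hG
    have hflatne : M.IsFlat (Fv v) ∧ Fv v ≠ ∅ :=
      ⟨hlev v, hFvne v (Finset.mem_of_mem_filter _ hv)⟩
    rw [hfac_eq (Fv v) hflatne] at hG
    obtain ⟨i, _, hi⟩ := Finset.mem_image.1 hG
    exact hi ▸ (bmem (Fv v) hflatne.1 hflatne.2 i).2
  -- nonnegativity of the gaps
  have hcvpos : ∀ v ∈ Λ, 0 ≤ cv v := by
    intro v hv
    rw [hcv]
    simp only
    have hmlt : m < v := (Finset.mem_filter.1 hv).2
    have hmD : m ∈ D := Finset.min'_mem D hDne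
    have hfne : (D.filter (· < v)).Nonempty := ⟨m, Finset.mem_filter.2 ⟨hmD, hmlt⟩⟩
    have : predv v = (D.filter (· < v)).max' hfne := by
      rw [hpredv]
      simp only
      rw [← Finset.coe_max' hfne]
      rfl
    rw [this]
    have := Finset.max'_mem _ hfne
    have hlt : (D.filter (· < v)).max' hfne < v := (Finset.mem_filter.1 this).2
    linarith
  refine ⟨S, ⟨?_, ?_⟩, c, m, ?_, ?_⟩
  · -- S ⊆ 𝓖 ∪ {univ}
    intro G hG
    exact Or.inl (hS𝓖 G hG)
  · -- nestedness
    intro T hTS hTcard hanti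
    intro hjoin
    set Vf := Λ.filter (fun v => ∃ X ∈ T, X ∈ fac (Fv v)) with hVf
    have hVfne : Vf.Nonempty := by
      obtain ⟨X₀, hX₀⟩ := Finset.card_pos.1 (by omega : 0 < T.card)
      obtain ⟨v, hv, hXv⟩ := (hmemS X₀).1 (hTS hX₀)
      exact ⟨v, Finset.mem_filter.2 ⟨hv, X₀, hX₀, hXv⟩⟩
    set v₀ := Vf.min' hVfne with hv₀
    have hv₀Vf : v₀ ∈ Vf := Finset.min'_mem _ _
    have hv₀Λ : v₀ ∈ Λ := Finset.mem_of_mem_filter _ hv₀Vf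
    have hXsub : ∀ X ∈ T, X ⊆ Fv v₀ := by
      intro X hX
      obtain ⟨v, hv, hXv⟩ := (hmemS X).1 (hTS hX)
      have hvVf : v ∈ Vf := Finset.mem_filter.2 ⟨hv, X, hX, hXv⟩
      have : v₀ ≤ v := Finset.min'_le _ _ hvVf
      exact (hfacsub v hv X hXv).trans (hFvanti v₀ v this)
    have hYsub : M.closure (T.sup id) ⊆ Fv v₀ := by
      apply closure_subset_flat (hlev v₀)
      intro x hx
      obtain ⟨X, hXT, hxX⟩ := Finset.mem_sup.1 hx
      exact hXsub X hXT hxX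
    rcases hjoin with hjoin | hjoin
    · -- the join is in 𝓖 : it is inside a factor of Fv v₀
      have hflatne : M.IsFlat (Fv v₀) ∧ Fv v₀ ≠ ∅ :=
        ⟨hlev v₀, hFvne v₀ (Finset.mem_of_mem_filter _ hv₀Λ)⟩
      obtain ⟨X₀, hX₀T, hX₀fac⟩ := (Finset.mem_filter.1 hv₀Vf).2
      rw [hfac_eq (Fv v₀) hflatne] at hX₀fac
      obtain ⟨i₀, _, hi₀⟩ := Finset.mem_image.1 hX₀fac
      obtain ⟨i, hYgi⟩ := bsub (Fv v₀) hflatne.1 hflatne.2 (M.closure (T.sup id)) hjoin hYsub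
      have hX₀Y : X₀ ⊆ M.closure (T.sup id) := by
        refine Finset.Subset.trans ?_ (fm_subset_closure (M := M))
        intro x hx
        exact Finset.mem_sup.2 ⟨X₀, hX₀T, hx⟩
      have hgig : bg (Fv v₀) hflatne.1 hflatne.2 i₀ ⊆ bg (Fv v₀) hflatne.1 hflatne.2 i := by
        rw [hi₀]
        exact hX₀Y.trans hYgi
      have heq := bmax (Fv v₀) hflatne.1 hflatne.2 i₀ _
        (bmem (Fv v₀) hflatne.1 hflatne.2 i).1 (bmem (Fv v₀) hflatne.1 hflatne.2 i).2 hgig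
      -- so Y ⊆ X₀
      have hYX₀ : M.closure (T.sup id) ⊆ X₀ := by
        rw [← hi₀, heq]
        exact hYgi
      obtain ⟨X', hX'T, hX'ne⟩ := Finset.exists_mem_ne (by omega : 1 < T.card) X₀
      have hX'Y : X' ⊆ M.closure (T.sup id) := by
        refine Finset.Subset.trans ?_ (fm_subset_closure (M := M))
        intro x hx
        exact Finset.mem_sup.2 ⟨X', hX'T, hx⟩
      exact (hanti X' hX'T X₀ hX₀T hX'ne).1 (hX'Y.trans hYX₀)
    · -- the join is univ : contradiction with properness
      rw [Set.mem_singleton_iff] at hjoin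
      have : (Finset.univ : Finset (Fin n)) ⊆ Fv v₀ := hjoin ▸ hYsub
      exact hFvproper v₀ hv₀Λ (Finset.Subset.antisymm (Finset.subset_univ _) this)
  · -- nonnegativity of c
    intro G _
    rw [hc]
    apply Finset.sum_nonneg
    intro v hv
    exact hcvpos v (Finset.mem_of_mem_filter _ hv)
  · -- the decomposition identity
    funext j
    show w j = m + ∑ G ∈ S, c G * indVec G j
    have hstep1 : ∑ G ∈ S, c G * indVec G j =
        ∑ G ∈ S, ∑ v ∈ Λ, (if G ∈ fac (Fv v) then cv v * indVec G j else 0) := by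
      apply Finset.sum_congr rfl
      intro G _
      rw [hc]
      simp only
      rw [Finset.sum_mul, ← Finset.sum_filter]
    have hstep2 : ∑ G ∈ S, ∑ v ∈ Λ, (if G ∈ fac (Fv v) then cv v * indVec G j else 0) =
        ∑ v ∈ Λ, ∑ G ∈ S, (if G ∈ fac (Fv v) then cv v * indVec G j else 0) :=
      Finset.sum_comm
    have hstep3 : ∀ v ∈ Λ, ∑ G ∈ S, (if G ∈ fac (Fv v) then cv v * indVec G j else 0) =
        cv v * indVec (Fv v) j := by
      intro v hv
      rw [← Finset.sum_filter]
      have hfilter : S.filter (fun G => G ∈ fac (Fv v)) = fac (Fv v) := by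
        ext G
        rw [Finset.mem_filter]
        constructor
        · rintro ⟨_, h⟩
          exact h
        · intro h
          exact ⟨(hmemS G).2 ⟨v, hv, h⟩, h⟩
      rw [hfilter, ← Finset.mul_sum, hind v hv j]
    have hstep4 : ∑ v ∈ Λ, cv v * indVec (Fv v) j =
        ∑ v ∈ D.filter (fun v => m < v ∧ v ≤ w j), cv v := by
      have h1 : ∀ v ∈ Λ, cv v * indVec (Fv v) j = if v ≤ w j then cv v else 0 := by
        intro v _
        simp only [indVec]
        have : j ∈ Fv v ↔ v ≤ w j := by
          rw [hFv]
          simp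
        by_cases h : v ≤ w j
        · rw [if_pos h, if_pos (this.2 h), mul_one]
        · rw [if_neg h, if_neg (fun hm => h (this.1 hm)), mul_zero]
      rw [Finset.sum_congr rfl h1, ← Finset.sum_filter, hΛ, Finset.filter_filter]
    have htel := telescope_sum D m (Finset.min'_mem D hDne)
      (fun u hu => Finset.min'_le D u hu) (w j) (Finset.mem_image_of_mem w (Finset.mem_univ j))
    rw [hstep1, hstep2, Finset.sum_congr rfl hstep3, hstep4]
    exact htel

end Forward

/-- For a loopless matroid `M` and a building set `𝓖` in its lattice
of flats, `w` lies in the Bergman fan iff `w` is a translate (by a multiple of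
`(1,…,1)`) of a nonnegative combination of indicator vectors of the members of a set
that is nested with respect to `𝓖 ∪ {[n]}`. -/
theorem statement13 {n r : ℕ} (M : FinMatroid n r) (hM : M.Loopless)
    (𝓖 : Set (Finset (Fin n))) (h𝓖 : M.IsFlatBuilding 𝓖) (w : Fin n → ℝ) :
    M.InBergmanFan w ↔
      ∃ S : Finset (Finset (Fin n)),
        M.IsNested (𝓖 ∪ {Finset.univ}) S ∧
        ∃ (c : Finset (Fin n) → ℝ) (lam : ℝ),
          (∀ G ∈ S, 0 ≤ c G) ∧
          w = fun i => lam + ∑ G ∈ S, c G * indVec G i := by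
  constructor
  · exact fun hB => nested_of_bergman hM h𝓖 hB
  · rintro ⟨S, hN, c, lam, hc, hw⟩
    exact bergman_of_nested hM h𝓖 hN hc hw
end

section
/- Let M be a loopless matroid on [n]. Then a vector w ∈ ℝ^n lies in the Bergman fan B̃(M) if and only if there exist a chain of flats ∅ ⊊ F₁ ⊊ F₂ ⊊ ⋯ ⊊ F_k ⊊ [n] of M, nonnegative reals c₁,…,c_k, and a real number λ, such that w = λ·(1,…,1) + Σ_{i=1}^k c_i e_{F_i}, where e_{F_i} denotes the 0/1 indicator vector of F_i. -/
open Finset Pointwise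

/-- In a loopless matroid every circuit has at least two elements. -/
lemma aux_circuit_two_le {n r : ℕ} (M : FinMatroid n r) (hM : M.Loopless)
    {C : Finset (Fin n)} (hC : M.IsCircuit C) : 2 ≤ C.card := by
  by_contra h
  push_neg at h
  have h1 : C.card = 0 ∨ C.card = 1 := by omega
  rcases h1 with h1 | h1
  · rw [Finset.card_eq_zero] at h1
    obtain ⟨B, hB⟩ := M.bases_nonempty
    exact hC.1 (h1 ▸ ⟨B, hB, Finset.empty_subset B⟩)
  · rw [Finset.card_eq_one] at h1
    obtain ⟨a, rfl⟩ := h1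
    exact hC.1 (hM a)

/-- For a loopless matroid `M`, `w` lies in the Bergman fan iff `w`
is a translate (by a multiple of `(1,…,1)`) of a nonnegative combination of indicator
vectors of a chain `∅ ⊊ F₁ ⊊ ⋯ ⊊ F_k ⊊ [n]` of flats of `M`. -/
theorem statement14 {n r : ℕ} (M : FinMatroid n r) (hM : M.Loopless) (w : Fin n → ℝ) :
    M.InBergmanFan w ↔
      ∃ (k : ℕ) (F : Fin k → Finset (Fin n)) (c : Fin k → ℝ) (lam : ℝ),
        (∀ i, M.IsFlat (F i)) ∧ (∀ i, F i ≠ ∅) ∧ (∀ i, F i ≠ Finset.univ) ∧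
        (∀ i j : Fin k, i < j → F i ⊂ F j) ∧ (∀ i, 0 ≤ c i) ∧
        w = fun t => lam + ∑ i, c i * indVec (F i) t := by
  classical
  constructor
  · -- Forward direction
    intro hw
    set V : Finset ℝ := Finset.image w Finset.univ with hV
    by_cases hVne : V.Nonempty
    swap
    · refine ⟨0, finZeroElim, finZeroElim, 0, fun i => i.elim0, fun i => i.elim0,
        fun i => i.elim0, fun i => i.elim0, fun i => i.elim0, ?_⟩
      funext t
      exact absurd ⟨w t, Finset.mem_image_of_mem w (Finset.mem_univ t)⟩ hVne
    · set m := V.card with hm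
      have hm1 : 0 < m := Finset.card_pos.mpr hVne
      set k := m - 1 with hk
      have hkm : k < m := by omega
      set v : Fin m → ℝ := fun j => ((V.orderIsoOfFin rfl) j : ℝ) with hv
      have hvmono : StrictMono v := fun a b hab =>
        Subtype.coe_lt_coe.mpr ((V.orderIsoOfFin rfl).strictMono hab)
      set u : ℕ → ℝ := fun j => v ⟨min j k, by omega⟩ with hu
      have humono : ∀ a b : ℕ, a ≤ b → u a ≤ u b := by
        intro a b hab
        rcases eq_or_lt_of_le (min_le_min_right k hab) with h | h
        · simp only [hu]; rw [show (⟨min a k, by omega⟩ : Fin m) = ⟨min b k, by omega⟩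
            from Fin.ext h]
        · exact le_of_lt (hvmono (Fin.mk_lt_mk.mpr h))
      have hustrict : ∀ a b : ℕ, a < b → b ≤ k → u a < u b := by
        intro a b hab hbk
        exact hvmono (Fin.mk_lt_mk.mpr (by omega))
      have hult : ∀ a b : ℕ, a ≤ k → b ≤ k → (u a ≤ u b ↔ a ≤ b) := by
        intro a b hak hbk
        constructor
        · intro h
          by_contra hba
          exact absurd (hustrict b a (by omega) hak) (not_lt.mpr h)
        · exact humono a b
      have hexists : ∀ j : ℕ, ∃ t, w t = u j := by
        intro j
        have hmem : u j ∈ V := ((V.orderIsoOfFin rfl) ⟨min j k, by omega⟩).2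
        rw [hV, Finset.mem_image] at hmem
        obtain ⟨t, _, ht⟩ := hmem
        exact ⟨t, ht⟩
      have hval : ∀ t, ∃ j : ℕ, j ≤ k ∧ w t = u j := by
        intro t
        have hx : w t ∈ V := Finset.mem_image_of_mem w (Finset.mem_univ t)
        set jf := (V.orderIsoOfFin rfl).symm ⟨w t, hx⟩ with hjf
        have hj : v jf = w t :=
          congrArg Subtype.val ((V.orderIsoOfFin rfl).apply_symm_apply ⟨w t, hx⟩)
        refine ⟨jf.1, by have := jf.isLt; omega, ?_⟩
        have hfin : (⟨min jf.1 k, by omega⟩ : Fin m) = jf :=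
          Fin.ext (by have := jf.isLt; simp only [Fin.val_mk]; omega)
        exact hj.symm.trans (congrArg v hfin).symm
      set F : Fin k → Finset (Fin n) :=
        fun i => Finset.univ.filter (fun t => u (k - i.1) ≤ w t) with hF
      have hmemF : ∀ (i : Fin k) t, t ∈ F i ↔ u (k - i.1) ≤ w t := by
        intro i t; simp [hF]
      set c : Fin k → ℝ := fun i => u (k - i.1) - u (k - i.1 - 1) with hc
      refine ⟨k, F, c, u 0, ?_, ?_, ?_, ?_, ?_, ?_⟩
      · -- flats
        intro i C hC h1
        obtain ⟨t, ht⟩ := Finset.card_eq_one.mp h1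
        obtain ⟨a, haC, b, hbC, hab, hvab, hmin⟩ := hw C hC
        have htC : t ∈ C \ F i := ht ▸ Finset.mem_singleton_self t
        rw [Finset.mem_sdiff] at htC
        have hwt : w t < u (k - i.1) := by
          have := htC.2; rw [hmemF] at this; exact not_le.mp this
        have ha : a ∈ C \ F i := by
          rw [Finset.mem_sdiff]
          refine ⟨haC, ?_⟩
          rw [hmemF]
          exact not_le.mpr (lt_of_le_of_lt (hmin t htC.1) hwt)
        have hb : b ∈ C \ F i := by
          rw [Finset.mem_sdiff]
          refine ⟨hbC, ?_⟩
          rw [hmemF]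
          exact not_le.mpr (lt_of_le_of_lt (hvab ▸ hmin t htC.1) hwt)
        rw [ht, Finset.mem_singleton] at ha hb
        exact hab (ha.trans hb.symm)
      · -- nonempty
        intro i
        obtain ⟨t, htw⟩ := hexists k
        refine Finset.ne_empty_of_mem (a := t) ?_
        rw [hmemF, htw]
        exact humono _ _ (by omega)
      · -- not univ
        intro i hequ
        obtain ⟨t, htw⟩ := hexists 0
        have htF : t ∈ F i := hequ ▸ Finset.mem_univ t
        rw [hmemF, htw] at htF
        exact absurd (hustrict 0 (k - i.1) (by have := i.isLt; omega) (by omega))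
          (not_lt.mpr htF)
      · -- chain
        intro i j hij
        have hij' : i.1 < j.1 := hij
        have hji : k - j.1 < k - i.1 := by have := j.isLt; omega
        have hsub : F i ⊆ F j := by
          intro t htF
          rw [hmemF] at htF ⊢
          exact le_trans (humono _ _ (le_of_lt hji)) htF
        rw [Finset.ssubset_iff_of_subset hsub]
        obtain ⟨t, htw⟩ := hexists (k - j.1)
        refine ⟨t, ?_, ?_⟩
        · rw [hmemF, htw]
        · rw [hmemF, htw]
          exact not_le.mpr (hustrict _ _ hji (by omega))
      · -- nonneg
        intro i
        rw [hc]
        exact sub_nonneg.mpr (humono _ _ (by omega))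
      · -- equality
        funext t
        obtain ⟨j, hjk, hwt⟩ := hval t
        rw [hwt]
        have hiff : ∀ i : Fin k, (t ∈ F i) ↔ k - i.1 ≤ j := by
          intro i
          rw [hmemF, hwt, hult _ _ (by omega) hjk]
        have step1 : ∑ i : Fin k, c i * indVec (F i) t =
            ∑ l ∈ Finset.range k, (if k - l ≤ j then u (k - l) - u (k - l - 1) else 0) := by
          rw [← Fin.sum_univ_eq_sum_range]
          refine Finset.sum_congr rfl fun i _ => ?_
          by_cases h : k - i.1 ≤ j
          · simp only [indVec, if_pos ((hiff i).mpr h), mul_one, if_pos h, hc]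
          · have hnot : t ∉ F i := fun hm => h ((hiff i).mp hm)
            simp only [indVec, if_neg hnot, mul_zero, if_neg h]
        have step2 : ∑ l ∈ Finset.range k,
              (if k - l ≤ j then u (k - l) - u (k - l - 1) else 0) =
            ∑ l ∈ Finset.range k, (if l < j then u (l + 1) - u l else 0) := by
          rw [← Finset.sum_range_reflect]
          refine Finset.sum_congr rfl fun l hl => ?_
          rw [Finset.mem_range] at hl
          have h1 : k - (k - 1 - l) = l + 1 := by omega
          rw [h1]
          have h2 : (l + 1 ≤ j) = (l < j) := propext ⟨fun h => h, fun h => h⟩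
          simp [h2]
        have step3 : ∑ l ∈ Finset.range k, (if l < j then u (l + 1) - u l else 0) =
            ∑ l ∈ Finset.range j, (u (l + 1) - u l) := by
          rw [← Finset.sum_filter]
          congr 1
          ext l
          simp only [Finset.mem_filter, Finset.mem_range]
          omega
        rw [step1, step2, step3, Finset.sum_range_sub u j]
        ring
  · -- Backward direction
    rintro ⟨k, F, c, lam, hflat, hne, hnuniv, hchain, hcnn, hw⟩
    intro C hC
    have h2 : 2 ≤ C.card := aux_circuit_two_le M hM hC
    set Q : Finset (Fin k) := Finset.univ.filter (fun i => C ⊆ F i) with hQ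
    set P : Finset (Fin k) := Finset.univ.filter (fun i => 0 < c i ∧ ¬ C ⊆ F i) with hP
    -- value of w at an element avoiding all sets indexed by P
    have eqval : ∀ s ∈ C, (∀ i ∈ P, s ∉ F i) →
        w s = lam + ∑ i ∈ Q, c i := by
      intro s hs hsP
      rw [hw]
      show lam + ∑ i : Fin k, c i * indVec (F i) s = lam + ∑ i ∈ Q, c i
      congr 1
      rw [← Finset.sum_subset (Finset.subset_univ Q) (fun i _ hiQ => ?_)]
      · refine Finset.sum_congr rfl fun i hiQ => ?_
        rw [hQ, Finset.mem_filter] at hiQ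
        have : s ∈ F i := hiQ.2 hs
        simp [indVec, this]
      · rw [hQ, Finset.mem_filter] at hiQ
        push_neg at hiQ
        have hCi : ¬ C ⊆ F i := hiQ (Finset.mem_univ i)
        rcases lt_or_eq_of_le (hcnn i) with hci | hci
        · have hiP : i ∈ P := by
            rw [hP, Finset.mem_filter]
            exact ⟨Finset.mem_univ i, hci, hCi⟩
          simp [indVec, hsP i hiP]
        · rw [← hci, zero_mul]
    -- lower bound for w on C
    have keylb : ∀ x ∈ C, lam + ∑ i ∈ Q, c i ≤ w x := by
      intro x hx
      rw [hw]
      show lam + ∑ i ∈ Q, c i ≤ lam + ∑ i : Fin k, c i * indVec (F i) x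
      refine add_le_add (le_refl lam) ?_
      calc ∑ i ∈ Q, c i = ∑ i ∈ Q, c i * indVec (F i) x := by
            refine Finset.sum_congr rfl fun i hiQ => ?_
            rw [hQ, Finset.mem_filter] at hiQ
            have : x ∈ F i := hiQ.2 hx
            simp [indVec, this]
        _ ≤ ∑ i, c i * indVec (F i) x := by
            refine Finset.sum_le_sum_of_subset_of_nonneg (Finset.subset_univ Q)
              fun i _ _ => mul_nonneg (hcnn i) ?_
            unfold indVec
            split <;> norm_num
    -- find two distinct elements of C avoiding all sets indexed by P
    have main : ∃ s ∈ C, ∃ t ∈ C, s ≠ t ∧ (∀ i ∈ P, s ∉ F i) ∧ (∀ i ∈ P, t ∉ F i) := by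
      by_cases hPne : P.Nonempty
      · set i₀ := P.max' hPne with hi₀
        have hi₀P : i₀ ∈ P := P.max'_mem hPne
        have hss : ∀ i ∈ P, F i ⊆ F i₀ := by
          intro i hi
          rcases lt_or_eq_of_le (P.le_max' i hi) with h | h
          · exact (hchain i i₀ h).1
          · rw [h]
        have hCi₀ : ¬ C ⊆ F i₀ := by
          rw [hP, Finset.mem_filter] at hi₀P
          exact hi₀P.2.2
        have hcard : 2 ≤ (C \ F i₀).card := by
          have h0 : (C \ F i₀).Nonempty := by
            rw [Finset.sdiff_nonempty]; exact hCi₀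
          have h1 : (C \ F i₀).card ≠ 1 := hflat i₀ C hC
          have := Finset.card_pos.mpr h0
          omega
        obtain ⟨s, hs, t, ht, hst⟩ := Finset.one_lt_card.mp hcard
        rw [Finset.mem_sdiff] at hs ht
        exact ⟨s, hs.1, t, ht.1, hst,
          fun i hi hsF => hs.2 (hss i hi hsF),
          fun i hi htF => ht.2 (hss i hi htF)⟩
      · obtain ⟨s, hs, t, ht, hst⟩ := Finset.one_lt_card.mp h2
        exact ⟨s, hs, t, ht, hst,
          fun i hi => absurd ⟨i, hi⟩ hPne, fun i hi => absurd ⟨i, hi⟩ hPne⟩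
    obtain ⟨s, hs, t, ht, hst, hsP, htP⟩ := main
    refine ⟨s, hs, t, ht, hst, ?_, ?_⟩
    · rw [eqval s hs hsP, eqval t ht htP]
    · intro x hx
      rw [eqval s hs hsP]
      exact keylb x hx
end

section
/- Let M be a loopless matroid of rank r on [n], let 𝓖 be a building set in the lattice of flats L_M, and let S be a subset of 𝓖 ∪ {[n]} containing [n] that is nested with respect to the building set 𝓖 ∪ {[n]}. For G ∈ S let F_{<G} denote the closure of the union of those members of S that are properly contained in G (the closure of the empty union being ∅). Let w = Σ_{G∈S, G≠[n]} c_G e_G with all c_G > 0. Then a basis σ of M is w-maximal if and only if for every G ∈ S the set (σ ∩ G) ∖ F_{<G} is a basis of the minor (M|G)/F_{<G}; that is, M_w is the direct sum of the matroids (M|G)/F_{<G}, G ∈ S. -/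
open Finset Pointwise

/-! ### Auxiliary lemmas for Statement 15 -/

open scoped Classical

namespace FinMatroid

variable {n r : ℕ} (M : FinMatroid n r)

lemma indep_empty : M.Indep ∅ := by
  obtain ⟨B, hB⟩ := M.bases_nonempty
  exact ⟨B, hB, Finset.empty_subset _⟩

lemma Indep.subset {I J : Finset (Fin n)} (hJ : M.Indep J) (h : I ⊆ J) : M.Indep I := by
  obtain ⟨B, hB, hJB⟩ := hJ
  exact ⟨B, hB, h.trans hJB⟩

lemma indep_of_mem_bases {B : Finset (Fin n)} (hB : B ∈ M.bases) : M.Indep B :=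
  ⟨B, hB, subset_rfl⟩

lemma Indep.card_le {I : Finset (Fin n)} (hI : M.Indep I) : I.card ≤ r := by
  obtain ⟨B, hB, hIB⟩ := hI
  calc I.card ≤ B.card := Finset.card_le_card hIB
    _ = r := M.card_bases B hB

lemma mem_bases_of_indep_card {I : Finset (Fin n)} (hI : M.Indep I) (hc : I.card = r) :
    I ∈ M.bases := by
  obtain ⟨B, hB, hIB⟩ := hI
  have : I = B := Finset.eq_of_subset_of_card_le hIB (by rw [hc, M.card_bases B hB])
  exact this ▸ hB

/-- The augmentation property, derived from the basis-exchange axiom. -/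
lemma Indep.augment {I J : Finset (Fin n)} (hI : M.Indep I) (hJ : M.Indep J)
    (hcard : I.card < J.card) : ∃ x ∈ J, x ∉ I ∧ M.Indep (insert x I) := by
  obtain ⟨B₂, hB₂, hJB₂⟩ := hJ
  -- choose a basis B₁ ⊇ I minimizing |B₁ \ (I ∪ B₂)|
  have hne : (M.bases.filter fun B => I ⊆ B).Nonempty := by
    obtain ⟨B, hB, hIB⟩ := hI
    exact ⟨B, Finset.mem_filter.2 ⟨hB, hIB⟩⟩
  obtain ⟨B₁, hB₁mem, hmin⟩ := Finset.exists_min_image _ (fun B => (B \ (I ∪ B₂)).card) hne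
  rw [Finset.mem_filter] at hB₁mem
  obtain ⟨hB₁, hIB₁⟩ := hB₁mem
  by_cases hx : ∃ x ∈ J, x ∉ I ∧ x ∈ B₁
  · obtain ⟨x, hxJ, hxI, hxB₁⟩ := hx
    exact ⟨x, hxJ, hxI, B₁, hB₁, Finset.insert_subset hxB₁ hIB₁⟩
  push_neg at hx
  exfalso
  -- first show B₁ \ (I ∪ B₂) = ∅ using minimality
  have hBempty : B₁ \ (I ∪ B₂) = ∅ := by
    by_contra hne'
    obtain ⟨e, he⟩ := Finset.nonempty_of_ne_empty hne'
    rw [Finset.mem_sdiff, Finset.mem_union] at he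
    push_neg at he
    obtain ⟨heB₁, heI, heB₂⟩ := he
    obtain ⟨f, hf, hBnew⟩ := M.exchange B₁ hB₁ B₂ hB₂ e (Finset.mem_sdiff.2 ⟨heB₁, heB₂⟩)
    rw [Finset.mem_sdiff] at hf
    have hInew : I ⊆ insert f (B₁.erase e) := fun y hy =>
      Finset.mem_insert.2 (Or.inr (Finset.mem_erase.2 ⟨fun h => heI (h ▸ hy), hIB₁ hy⟩))
    have hle := hmin _ (Finset.mem_filter.2 ⟨hBnew, hInew⟩)
    have hsub : insert f (B₁.erase e) \ (I ∪ B₂) ⊆ (B₁ \ (I ∪ B₂)).erase e := by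
      intro y hy
      rw [Finset.mem_sdiff, Finset.mem_insert, Finset.mem_union] at hy
      push_neg at hy
      obtain ⟨hy1, hy2, hy3⟩ := hy
      rcases hy1 with rfl | hy1
      · exact absurd hf.1 hy3
      · rw [Finset.mem_erase] at hy1 ⊢
        exact ⟨hy1.1, Finset.mem_sdiff.2 ⟨hy1.2, by rw [Finset.mem_union]; tauto⟩⟩
    have hlt : ((B₁ \ (I ∪ B₂)).erase e).card < (B₁ \ (I ∪ B₂)).card :=
      Finset.card_erase_lt_of_mem (Finset.mem_sdiff.2 ⟨heB₁, by
        rw [Finset.mem_union]; tauto⟩)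
    have := Finset.card_le_card hsub
    omega
  -- counting contradiction
  have h1 : B₁ \ B₂ ⊆ I \ B₂ := by
    intro y hy
    rw [Finset.mem_sdiff] at hy ⊢
    refine ⟨?_, hy.2⟩
    by_contra hyI
    have : y ∈ B₁ \ (I ∪ B₂) := Finset.mem_sdiff.2 ⟨hy.1, by
      rw [Finset.mem_union]; tauto⟩
    rw [hBempty] at this; exact absurd this (Finset.notMem_empty y)
  have h2 : J \ I ⊆ B₂ \ B₁ := by
    intro y hy
    rw [Finset.mem_sdiff] at hy ⊢
    exact ⟨hJB₂ hy.1, hx y hy.1 hy.2⟩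
  have hcard12 : (B₁ \ B₂).card = (B₂ \ B₁).card := by
    have := M.card_bases B₁ hB₁
    have := M.card_bases B₂ hB₂
    have h := Finset.card_sdiff_add_card_inter B₁ B₂
    have h' := Finset.card_sdiff_add_card_inter B₂ B₁
    rw [Finset.inter_comm] at h'
    omega
  have hIJ : (I \ B₂).card ≤ (I \ J).card :=
    Finset.card_le_card (fun y hy => by
      rw [Finset.mem_sdiff] at hy ⊢
      exact ⟨hy.1, fun hyJ => hy.2 (hJB₂ hyJ)⟩)
  have hJI : (J \ I).card ≤ (B₂ \ B₁).card := Finset.card_le_card h2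
  have hBI : (B₁ \ B₂).card ≤ (I \ B₂).card := Finset.card_le_card h1
  have e1 : (J \ I).card + (I ∩ J).card = J.card := by
    rw [Finset.inter_comm]; exact Finset.card_sdiff_add_card_inter J I
  have e2 : (I \ J).card + (I ∩ J).card = I.card := Finset.card_sdiff_add_card_inter I J
  omega


/-! ### Rank lemmas -/

lemma exists_max_indep (F : Finset (Fin n)) :
    ∃ I, I ⊆ F ∧ M.Indep I ∧ I.card = M.rk F := by
  classical
  have hne : (F.powerset.filter (fun I => FamIndep M.bases I)).Nonempty :=
    ⟨∅, Finset.mem_filter.2 ⟨Finset.mem_powerset.2 (Finset.empty_subset F), M.indep_empty⟩⟩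
  obtain ⟨I, hI, hIcard⟩ := Finset.exists_mem_eq_sup _ hne Finset.card
  rw [Finset.mem_filter, Finset.mem_powerset] at hI
  exact ⟨I, hI.1, hI.2, hIcard.symm⟩

lemma card_le_rk {I F : Finset (Fin n)} (h : I ⊆ F) (hI : M.Indep I) :
    I.card ≤ M.rk F := by
  classical
  exact Finset.le_sup (f := Finset.card)
    (Finset.mem_filter.2 ⟨Finset.mem_powerset.2 h, hI⟩)

lemma rk_mono {A B : Finset (Fin n)} (h : A ⊆ B) : M.rk A ≤ M.rk B := by
  obtain ⟨I, hIA, hI, hc⟩ := M.exists_max_indep A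
  rw [← hc]; exact M.card_le_rk (hIA.trans h) hI

lemma Indep.rk_eq {I : Finset (Fin n)} (hI : M.Indep I) : M.rk I = I.card := by
  refine le_antisymm ?_ (M.card_le_rk subset_rfl hI)
  obtain ⟨J, hJI, hJ, hc⟩ := M.exists_max_indep I
  rw [← hc]; exact Finset.card_le_card hJI

lemma rk_empty : M.rk ∅ = 0 := by
  obtain ⟨I, hIe, _, hc⟩ := M.exists_max_indep ∅
  rw [← hc, Finset.subset_empty.mp hIe, Finset.card_empty]

lemma rk_univ : M.rk Finset.univ = r := by
  obtain ⟨B, hB⟩ := M.bases_nonempty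
  refine le_antisymm ?_ ?_
  · obtain ⟨I, _, hI, hc⟩ := M.exists_max_indep Finset.univ
    rw [← hc]; exact hI.card_le
  · have := M.card_le_rk (Finset.subset_univ B) (M.indep_of_mem_bases hB)
    rwa [M.card_bases B hB] at this

lemma exists_extend {I F : Finset (Fin n)} (hIF : I ⊆ F) (hI : M.Indep I) :
    ∃ J, I ⊆ J ∧ J ⊆ F ∧ M.Indep J ∧ J.card = M.rk F := by
  obtain ⟨K, hKF, hK, hKc⟩ := M.exists_max_indep F
  by_cases h : M.rk F ≤ I.card
  · exact ⟨I, subset_rfl, hIF, hI, le_antisymm (M.card_le_rk hIF hI) h⟩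
  · -- augment; induction on rk F - I.card
    push_neg at h
    have : ∀ m : ℕ, ∀ I', I' ⊆ F → M.Indep I' → I'.card + m = M.rk F →
        ∃ J, I' ⊆ J ∧ J ⊆ F ∧ M.Indep J ∧ J.card = M.rk F := by
      intro m
      induction m with
      | zero => intro I' h1 h2 h3; exact ⟨I', subset_rfl, h1, h2, by omega⟩
      | succ k ih =>
        intro I' h1 h2 h3
        obtain ⟨x, hxK, hxI', hx⟩ := h2.augment M hK (by omega)
        obtain ⟨J, hJ1, hJ2, hJ3, hJ4⟩ := ih (insert x I')
          (Finset.insert_subset (hKF hxK) h1) hx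
          (by rw [Finset.card_insert_of_notMem hxI']; omega)
        exact ⟨J, (Finset.subset_insert x I').trans hJ1, hJ2, hJ3, hJ4⟩
    exact this (M.rk F - I.card) I hIF hI (by omega)

lemma rk_union_le_card (A C : Finset (Fin n)) : M.rk (A ∪ C) ≤ M.rk A + C.card := by
  classical
  induction C using Finset.induction with
  | empty => simp
  | @insert c C hc ih =>
    rw [Finset.card_insert_of_notMem hc]
    have h1 : A ∪ insert c C = insert c (A ∪ C) := Finset.union_insert c A C
    have h2 : M.rk (insert c (A ∪ C)) ≤ M.rk (A ∪ C) + 1 := by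
      obtain ⟨I, hIs, hI, hc'⟩ := M.exists_max_indep (insert c (A ∪ C))
      have : I.erase c ⊆ A ∪ C := by
        intro y hy
        rw [Finset.mem_erase] at hy
        rcases Finset.mem_insert.mp (hIs hy.2) with h | h
        · exact absurd h hy.1
        · exact h
      have hle := M.card_le_rk this (hI.subset M (Finset.erase_subset c I))
      have := Finset.card_erase_le (s := I) (a := c)
      have := Finset.pred_card_le_card_erase (s := I) (a := c)
      omega
    calc M.rk (A ∪ insert c C) = M.rk (insert c (A ∪ C)) := by rw [h1]
      _ ≤ M.rk (A ∪ C) + 1 := h2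
      _ ≤ M.rk A + C.card + 1 := by omega

lemma rk_insert_of_rk_insert {A B : Finset (Fin n)} (x : Fin n)
    (hx : M.rk (insert x A) = M.rk A) (hAB : A ⊆ B) :
    M.rk (insert x B) = M.rk B := by
  by_cases hxB : x ∈ B
  · rw [Finset.insert_eq_self.2 hxB]
  refine le_antisymm ?_ (M.rk_mono (Finset.subset_insert x B))
  by_contra hlt
  push_neg at hlt
  obtain ⟨I, hIA, hI, hIc⟩ := M.exists_max_indep A
  obtain ⟨J, hIJ, hJB, hJ, hJc⟩ := M.exists_extend (hIA.trans hAB) hI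
  obtain ⟨K, hKs, hK, hKc⟩ := M.exists_max_indep (insert x B)
  obtain ⟨y, hyK, hyJ, hy⟩ := hJ.augment M hK (by omega)
  have hxA : x ∉ A := fun h => hxB (hAB h)
  rcases Finset.mem_insert.mp (hKs hyK) with rfl | hyB
  · -- y = x : insert x J indep, so insert x I indep, contradicting hx
    have hxI : y ∉ I := fun h => hxA (hIA h)
    have hind : M.Indep (insert y I) := hy.subset M (Finset.insert_subset_insert _ hIJ)
    have := M.card_le_rk (Finset.insert_subset_insert (s := I) (t := A) y hIA) hind
    rw [Finset.card_insert_of_notMem hxI, hx] at this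
    omega
  · have := M.card_le_rk (Finset.insert_subset hyB hJB) hy
    rw [Finset.card_insert_of_notMem hyJ] at this
    omega

lemma rk_union_eq {A C : Finset (Fin n)} (h : ∀ x ∈ C, M.rk (insert x A) = M.rk A) :
    M.rk (A ∪ C) = M.rk A := by
  classical
  induction C using Finset.induction with
  | empty => simp
  | @insert c C hc ih =>
    have h1 : A ∪ insert c C = insert c (A ∪ C) := Finset.union_insert c A C
    rw [h1, M.rk_insert_of_rk_insert c (h c (Finset.mem_insert_self c C))
      Finset.subset_union_left, ih (fun x hx => h x (Finset.mem_insert_of_mem hx))]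

lemma rk_union_le (A B : Finset (Fin n)) : M.rk (A ∪ B) ≤ M.rk A + M.rk B := by
  obtain ⟨I, hIB, hI, hIc⟩ := M.exists_max_indep B
  have key : ∀ x ∈ B, M.rk (insert x (A ∪ I)) = M.rk (A ∪ I) := by
    intro x hx
    refine M.rk_insert_of_rk_insert x ?_ Finset.subset_union_right
    refine le_antisymm ?_ (M.rk_mono (Finset.subset_insert x I))
    rw [hI.rk_eq, hIc]
    exact M.rk_mono (Finset.insert_subset hx hIB)
  calc M.rk (A ∪ B) ≤ M.rk ((A ∪ I) ∪ B) :=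
        M.rk_mono (Finset.union_subset_union subset_rfl (by intro y hy; exact hy) |>.trans
          (by intro y hy; rcases Finset.mem_union.mp hy with h | h
              · exact Finset.mem_union_left _ (Finset.mem_union_left _ h)
              · exact Finset.mem_union_right _ h))
    _ = M.rk (A ∪ I) := M.rk_union_eq key
    _ ≤ M.rk A + I.card := M.rk_union_le_card A I
    _ = M.rk A + M.rk B := by rw [hIc]

/-! ### Flats and closure -/

lemma isFlat_univ : M.IsFlat Finset.univ := by
  intro C _
  simp [Finset.sdiff_eq_empty_iff_subset.2 (Finset.subset_univ C)]

lemma isFlat_inter {F₁ F₂ : Finset (Fin n)} (h₁ : M.IsFlat F₁) (h₂ : M.IsFlat F₂) :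
    M.IsFlat (F₁ ∩ F₂) := by
  intro C hC hcard
  obtain ⟨z, hz⟩ := Finset.card_eq_one.mp hcard
  have hsub : ∀ y ∈ C, y ≠ z → y ∈ F₁ ∩ F₂ := by
    intro y hy hyz
    by_contra hyF
    have : y ∈ C \ (F₁ ∩ F₂) := Finset.mem_sdiff.2 ⟨hy, hyF⟩
    rw [hz, Finset.mem_singleton] at this
    exact hyz this
  have h1 : (C \ F₁).card ≤ 1 := by
    refine le_trans (Finset.card_le_card (fun y hy => ?_)) (le_of_eq (Finset.card_singleton z))
    rw [Finset.mem_sdiff] at hy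
    rw [Finset.mem_singleton]
    by_contra hyz
    exact hy.2 (Finset.mem_of_mem_inter_left (hsub y hy.1 hyz))
  have h2 : (C \ F₂).card ≤ 1 := by
    refine le_trans (Finset.card_le_card (fun y hy => ?_)) (le_of_eq (Finset.card_singleton z))
    rw [Finset.mem_sdiff] at hy
    rw [Finset.mem_singleton]
    by_contra hyz
    exact hy.2 (Finset.mem_of_mem_inter_right (hsub y hy.1 hyz))
  have hz1 : z ∈ C := by
    have : z ∈ C \ (F₁ ∩ F₂) := by rw [hz]; exact Finset.mem_singleton_self z
    exact (Finset.mem_sdiff.mp this).1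
  have hzF : z ∉ F₁ ∩ F₂ := by
    have : z ∈ C \ (F₁ ∩ F₂) := by rw [hz]; exact Finset.mem_singleton_self z
    exact (Finset.mem_sdiff.mp this).2
  rw [Finset.mem_inter] at hzF
  push_neg at hzF
  by_cases hz1' : z ∈ F₁
  · have : z ∈ C \ F₂ := Finset.mem_sdiff.2 ⟨hz1, hzF hz1'⟩
    have : (C \ F₂).card = 1 := le_antisymm h2 (Finset.card_pos.2 ⟨z, this⟩)
    exact h₂ C hC this
  · have : z ∈ C \ F₁ := Finset.mem_sdiff.2 ⟨hz1, hz1'⟩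
    have : (C \ F₁).card = 1 := le_antisymm h1 (Finset.card_pos.2 ⟨z, this⟩)
    exact h₁ C hC this

lemma isFlat_empty (hM : M.Loopless) : M.IsFlat ∅ := by
  intro C hC hcard
  obtain ⟨z, hz⟩ := Finset.card_eq_one.mp (by rwa [Finset.sdiff_empty] at hcard)
  exact hC.1 (hz ▸ hM z)

/-- The rank-theoretic span of a set. -/
noncomputable def spanFlat (A : Finset (Fin n)) : Finset (Fin n) :=
  Finset.univ.filter fun x => M.rk (insert x A) = M.rk A

lemma subset_spanFlat (A : Finset (Fin n)) : A ⊆ M.spanFlat A := by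
  intro x hx
  rw [spanFlat, Finset.mem_filter]
  exact ⟨Finset.mem_univ x, by rw [Finset.insert_eq_self.2 hx]⟩

lemma rk_spanFlat (A : Finset (Fin n)) : M.rk (M.spanFlat A) = M.rk A := by
  have h1 : M.rk (A ∪ M.spanFlat A) = M.rk A := by
    refine M.rk_union_eq (fun x hx => ?_)
    rw [spanFlat, Finset.mem_filter] at hx
    exact hx.2
  refine le_antisymm ?_ (M.rk_mono (M.subset_spanFlat A))
  rw [← h1]
  exact M.rk_mono Finset.subset_union_right

lemma isFlat_spanFlat (A : Finset (Fin n)) : M.IsFlat (M.spanFlat A) := by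
  intro C hC hcard
  obtain ⟨z, hz⟩ := Finset.card_eq_one.mp hcard
  have hzC : z ∈ C := by
    have : z ∈ C \ M.spanFlat A := by rw [hz]; exact Finset.mem_singleton_self z
    exact (Finset.mem_sdiff.mp this).1
  have hzF : z ∉ M.spanFlat A := by
    have : z ∈ C \ M.spanFlat A := by rw [hz]; exact Finset.mem_singleton_self z
    exact (Finset.mem_sdiff.mp this).2
  have hCz : C.erase z ⊆ M.spanFlat A := by
    intro y hy
    rw [Finset.mem_erase] at hy
    by_contra hyF
    have : y ∈ C \ M.spanFlat A := Finset.mem_sdiff.2 ⟨hy.2, hyF⟩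
    rw [hz, Finset.mem_singleton] at this
    exact hy.1 this
  -- rk (A ∪ C.erase z) = rk A
  have h1 : M.rk (A ∪ C.erase z) = M.rk A := by
    refine M.rk_union_eq (fun x hx => ?_)
    have := hCz hx
    rw [spanFlat, Finset.mem_filter] at this
    exact this.2
  -- z is spanned by C.erase z since C is dependent and C.erase z is independent
  have hCeIndep : M.Indep (C.erase z) := hC.2 _ (Finset.erase_ssubset hzC)
  have hrkC : M.rk C = (C.erase z).card := by
    refine le_antisymm ?_ (M.card_le_rk (Finset.erase_subset z C) hCeIndep)
    obtain ⟨I, hIC, hI, hIc⟩ := M.exists_max_indep C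
    have : I ≠ C := fun h => hC.1 (h ▸ hI)
    have hIC' : I ⊂ C := Finset.ssubset_iff_subset_ne.2 ⟨hIC, this⟩
    have := Finset.card_lt_card hIC'
    have := Finset.card_erase_of_mem hzC
    omega
  have hinsz : M.rk (insert z (C.erase z)) = M.rk (C.erase z) := by
    rw [Finset.insert_erase hzC, hrkC, hCeIndep.rk_eq]
  have h2 : M.rk (insert z (A ∪ C.erase z)) = M.rk (A ∪ C.erase z) :=
    M.rk_insert_of_rk_insert z hinsz Finset.subset_union_right
  have h3 : M.rk (insert z A) = M.rk A := by
    refine le_antisymm ?_ (M.rk_mono (Finset.subset_insert z A))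
    calc M.rk (insert z A) ≤ M.rk (insert z (A ∪ C.erase z)) :=
          M.rk_mono (Finset.insert_subset_insert z Finset.subset_union_left)
      _ = M.rk (A ∪ C.erase z) := h2
      _ = M.rk A := h1
  exact hzF (by rw [spanFlat, Finset.mem_filter]; exact ⟨Finset.mem_univ z, h3⟩)

lemma subset_closure (A : Finset (Fin n)) : A ⊆ M.closure A := by
  intro x hx
  rw [closure, Finset.mem_filter]
  exact ⟨Finset.mem_univ x, fun F _ hAF => hAF hx⟩

lemma closure_subset_flat {A F : Finset (Fin n)} (hF : M.IsFlat F) (hAF : A ⊆ F) :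
    M.closure A ⊆ F := by
  intro x hx
  rw [closure, Finset.mem_filter] at hx
  exact hx.2 F hF hAF

lemma isFlat_closure (A : Finset (Fin n)) : M.IsFlat (M.closure A) := by
  intro C hC hcard
  obtain ⟨z, hz⟩ := Finset.card_eq_one.mp hcard
  have hzC : z ∈ C := by
    have : z ∈ C \ M.closure A := by rw [hz]; exact Finset.mem_singleton_self z
    exact (Finset.mem_sdiff.mp this).1
  have hzF : z ∉ M.closure A := by
    have : z ∈ C \ M.closure A := by rw [hz]; exact Finset.mem_singleton_self z
    exact (Finset.mem_sdiff.mp this).2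
  refine hzF ?_
  rw [closure, Finset.mem_filter]
  refine ⟨Finset.mem_univ z, fun F hF hAF => ?_⟩
  -- C \ F ⊆ {z}, flatness of F forces C ⊆ F
  have hsub : C \ F ⊆ {z} := by
    intro y hy
    rw [Finset.mem_sdiff] at hy
    rw [Finset.mem_singleton]
    by_contra hyz
    have hyCl : y ∈ M.closure A := by
      by_contra hycl
      have : y ∈ C \ M.closure A := Finset.mem_sdiff.2 ⟨hy.1, hycl⟩
      rw [hz, Finset.mem_singleton] at this
      exact hyz this
    rw [closure, Finset.mem_filter] at hyCl
    exact hy.2 (hyCl.2 F hF hAF)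
  rcases Finset.subset_singleton_iff.mp hsub with h0 | h1
  · -- C ⊆ F, so z ∈ F
    have : C ⊆ F := fun y hy => by
      by_contra hyF
      have : y ∈ C \ F := Finset.mem_sdiff.2 ⟨hy, hyF⟩
      rw [h0] at this
      exact Finset.notMem_empty y this
    exact this hzC
  · exact absurd (by rw [h1]; exact Finset.card_singleton z) (hF C hC)

lemma closure_mono {A B : Finset (Fin n)} (h : A ⊆ B) : M.closure A ⊆ M.closure B :=
  M.closure_subset_flat (M.isFlat_closure B) (h.trans (M.subset_closure B))

lemma closure_flat_eq {F : Finset (Fin n)} (hF : M.IsFlat F) : M.closure F = F :=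
  le_antisymm (M.closure_subset_flat hF subset_rfl) (M.subset_closure F)

lemma closure_subset_spanFlat (A : Finset (Fin n)) : M.closure A ⊆ M.spanFlat A :=
  M.closure_subset_flat (M.isFlat_spanFlat A) (M.subset_spanFlat A)

lemma rk_closure (A : Finset (Fin n)) : M.rk (M.closure A) = M.rk A := by
  refine le_antisymm ?_ (M.rk_mono (M.subset_closure A))
  calc M.rk (M.closure A) ≤ M.rk (M.spanFlat A) := M.rk_mono (M.closure_subset_spanFlat A)
    _ = M.rk A := M.rk_spanFlat A

lemma closure_closure_union (A B : Finset (Fin n)) :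
    M.closure (M.closure A ∪ B) = M.closure (A ∪ B) := by
  refine le_antisymm ?_ (M.closure_mono (Finset.union_subset_union (M.subset_closure A) subset_rfl))
  refine M.closure_subset_flat (M.isFlat_closure (A ∪ B)) (Finset.union_subset ?_ ?_)
  · exact M.closure_subset_flat (M.isFlat_closure (A ∪ B))
      ((Finset.subset_union_left).trans (M.subset_closure (A ∪ B)))
  · exact (Finset.subset_union_right).trans (M.subset_closure (A ∪ B))

lemma closure_empty (hM : M.Loopless) : M.closure ∅ = ∅ :=
  Finset.subset_empty.mp (M.closure_subset_flat (M.isFlat_empty hM) subset_rfl)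

lemma exists_circuit_of_dep {D : Finset (Fin n)} (hD : ¬ M.Indep D) :
    ∃ C ⊆ D, M.IsCircuit C := by
  classical
  induction D using Finset.strongInduction with
  | _ D ih =>
    by_cases h : ∀ D' ⊂ D, M.Indep D'
    · exact ⟨D, subset_rfl, hD, h⟩
    · push_neg at h
      obtain ⟨D', hD', hD'dep⟩ := h
      obtain ⟨C, hC1, hC2⟩ := ih D' hD' hD'dep
      exact ⟨C, hC1.trans hD'.subset, hC2⟩

lemma mem_closure_erase_of_circuit {C : Finset (Fin n)} (hC : M.IsCircuit C) {x : Fin n}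
    (hx : x ∈ C) : x ∈ M.closure (C.erase x) := by
  by_contra hxcl
  have hflat := M.isFlat_closure (C.erase x)
  have hsub : C \ M.closure (C.erase x) = {x} := by
    refine le_antisymm ?_ ?_
    · intro y hy
      rw [Finset.mem_sdiff] at hy
      rw [Finset.mem_singleton]
      by_contra hyx
      exact hy.2 ((M.subset_closure (C.erase x)) (Finset.mem_erase.2 ⟨hyx, hy.1⟩))
    · intro y hy
      rw [Finset.mem_singleton] at hy
      subst hy
      exact Finset.mem_sdiff.2 ⟨hx, hxcl⟩
  exact hflat C hC (by rw [hsub]; exact Finset.card_singleton x)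

lemma not_mem_closure_of_indep_insert {A : Finset (Fin n)} {x : Fin n}
    (hx : x ∉ A) (hind : M.Indep (insert x A)) : x ∉ M.closure A := by
  intro hmem
  have h1 := M.closure_subset_spanFlat A hmem
  rw [spanFlat, Finset.mem_filter] at h1
  have h2 : M.rk (insert x A) = (insert x A).card := hind.rk_eq
  have h3 : M.rk A = A.card := (hind.subset M (Finset.subset_insert x A)).rk_eq
  rw [Finset.card_insert_of_notMem hx] at h2
  omega

/-! ### Restriction -/

lemma mem_restrictBases_iff {G B : Finset (Fin n)} :
    B ∈ M.restrictBases G ↔ B ⊆ G ∧ M.Indep B ∧ B.card = M.rk G := by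
  classical
  rw [restrictBases, famRestrictBases, Finset.mem_filter, Finset.mem_powerset]
  constructor
  · rintro ⟨hBG, hBi, hmax⟩
    refine ⟨hBG, hBi, ?_⟩
    obtain ⟨J, hBJ, hJG, hJi, hJc⟩ := M.exists_extend hBG hBi
    rw [hmax J hJG hJi hBJ]
    exact hJc
  · rintro ⟨hBG, hBi, hBc⟩
    refine ⟨hBG, hBi, fun B' hB'G hB'i hBB' => ?_⟩
    exact Finset.eq_of_subset_of_card_le hBB' (by rw [hBc]; exact M.card_le_rk hB'G hB'i)

lemma famIndep_restrict {G I : Finset (Fin n)} :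
    FamIndep (M.restrictBases G) I ↔ M.Indep I ∧ I ⊆ G := by
  constructor
  · rintro ⟨B, hB, hIB⟩
    rw [mem_restrictBases_iff] at hB
    exact ⟨hB.2.1.subset M hIB, hIB.trans hB.1⟩
  · rintro ⟨hIi, hIG⟩
    obtain ⟨J, hIJ, hJG, hJi, hJc⟩ := M.exists_extend hIG hIi
    exact ⟨J, M.mem_restrictBases_iff.2 ⟨hJG, hJi, hJc⟩, hIJ⟩

lemma famRk_restrict {G F : Finset (Fin n)} (h : F ⊆ G) :
    famRk (M.restrictBases G) F = M.rk F := by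
  classical
  refine le_antisymm (Finset.sup_le fun I hI => ?_) ?_
  · rw [Finset.mem_filter, Finset.mem_powerset] at hI
    exact M.card_le_rk hI.1 ((M.famIndep_restrict.mp hI.2).1)
  · obtain ⟨I, hIF, hIi, hIc⟩ := M.exists_max_indep F
    rw [← hIc]
    exact Finset.le_sup (f := Finset.card) (Finset.mem_filter.2
      ⟨Finset.mem_powerset.2 hIF, M.famIndep_restrict.2 ⟨hIi, hIF.trans h⟩⟩)

/-! ### Helpers for the building-set decomposition -/

lemma closure_sup_closures {k : ℕ} (f : Fin k → Finset (Fin n)) :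
    M.closure (Finset.univ.sup fun i => M.closure (f i)) =
      M.closure (Finset.univ.sup f) := by
  refine le_antisymm ?_ (M.closure_mono (Finset.sup_mono_fun fun i _ => M.subset_closure (f i)))
  refine M.closure_subset_flat (M.isFlat_closure _) (Finset.sup_le fun i _ => ?_)
  exact (M.closure_mono (Finset.le_sup (Finset.mem_univ i))).trans le_rfl

lemma rk_sup_le (T : Finset (Finset (Fin n))) : M.rk (T.sup id) ≤ ∑ H ∈ T, M.rk H := by
  classical
  induction T using Finset.induction with
  | empty => simp [M.rk_empty]
  | @insert H T hH ih =>
    rw [Finset.sup_insert, Finset.sum_insert hH]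
    calc M.rk (id H ⊔ T.sup id) ≤ M.rk (id H) + M.rk (T.sup id) := M.rk_union_le _ _
      _ ≤ M.rk H + ∑ H ∈ T, M.rk H := by exact Nat.add_le_add le_rfl ih

lemma sup_ite_eq {k : ℕ} (i : Fin k) (P : Finset (Fin n)) :
    (Finset.univ.sup fun l => if l = i then P else ∅) = P := by
  classical
  refine le_antisymm (Finset.sup_le fun l _ => ?_) ?_
  · by_cases h : l = i <;> simp [h]
  · have := Finset.le_sup (f := fun l => if l = i then P else (∅ : Finset (Fin n)))
      (Finset.mem_univ i)
    simpa using this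

/-- The key structural lemma: a pairwise-incomparable subfamily of a nested family
consists of pairwise disjoint flats, unions of independent pieces are independent,
and ranks add up on the closure of the union. -/
lemma nested_structure (hM : M.Loopless) {𝓖 : Set (Finset (Fin n))}
    (h𝓖 : M.IsFlatBuilding 𝓖) {S T : Finset (Finset (Fin n))}
    (hS : M.IsNested (𝓖 ∪ {Finset.univ}) S) (hT : T ⊆ S)
    (hinc : ∀ A ∈ T, ∀ B ∈ T, A ≠ B → ¬ A ⊆ B ∧ ¬ B ⊆ A)
    (huniv : Finset.univ ∉ T) :
    (∀ A ∈ T, ∀ B ∈ T, A ≠ B → A ∩ B = ∅) ∧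
    (∀ I : Finset (Fin n), I ⊆ T.sup id → (∀ H ∈ T, M.Indep (I ∩ H)) → M.Indep I) ∧
    M.rk (M.closure (T.sup id)) = ∑ H ∈ T, M.rk H := by
  classical
  -- members of T are nonempty flats in 𝓖
  have hTmem : ∀ H ∈ T, H ∈ 𝓖 ∧ M.IsFlat H ∧ H ≠ ∅ := by
    intro H hH
    have := hS.1 (hT hH)
    rcases this with h | h
    · exact ⟨h, (h𝓖.1 H h).1, (h𝓖.1 H h).2⟩
    · rw [Set.mem_singleton_iff] at h
      exact absurd (h ▸ hH) huniv
  rcases Nat.lt_or_ge T.card 2 with hTc | hTc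
  · -- trivial cases : |T| ≤ 1
    interval_cases h : T.card
    · have hTe : T = ∅ := Finset.card_eq_zero.mp h
      subst hTe
      refine ⟨by simp, fun I hI _ => ?_, by simp [M.closure_empty hM, M.rk_empty]⟩
      · rw [Finset.sup_empty] at hI
        rw [Finset.subset_empty.mp hI]
        exact M.indep_empty
    · obtain ⟨H, hHe⟩ := Finset.card_eq_one.mp h
      subst hHe
      have hHf : M.IsFlat H := (hTmem H (Finset.mem_singleton_self H)).2.1
      refine ⟨by simp, fun I hI hind => ?_, ?_⟩
      · rw [Finset.sup_singleton] at hI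
        have hI' : I ⊆ H := hI
        have := hind H (Finset.mem_singleton_self H)
        rwa [Finset.inter_eq_left.2 hI'] at this
      · rw [Finset.sup_singleton, Finset.sum_singleton]
        simp only [id]
        rw [M.closure_flat_eq hHf]
  -- main case : |T| ≥ 2
  set X := M.closure (T.sup id) with hXdef
  have hXflat : M.IsFlat X := M.isFlat_closure _
  obtain ⟨H₀, hH₀⟩ := Finset.card_pos.mp (by omega : 0 < T.card)
  have hsubX : ∀ H ∈ T, H ⊆ X := by
    intro H hH
    have h1 : id H ⊆ T.sup id := Finset.le_sup (f := id) hH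
    exact Finset.Subset.trans h1 (M.subset_closure _)
  have hXne : X ≠ ∅ := by
    intro hX
    exact (hTmem H₀ hH₀).2.2 (Finset.subset_empty.mp (hX ▸ hsubX H₀ hH₀))
  obtain ⟨k, g, hginj, hg₁, hgmax, hgcover, e, he⟩ := h𝓖.2 X hXflat hXne
  have hgflat : ∀ i, M.IsFlat (g i) := fun i => (h𝓖.1 (g i) (hg₁ i).1).1
  have hgne : ∀ i, g i ≠ ∅ := fun i => (h𝓖.1 (g i) (hg₁ i).1).2
  -- k is positive
  have hk : 0 < k := by
    by_contra hk0
    push_neg at hk0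
    interval_cases k
    have h1 : (⟨∅, M.isFlat_empty hM, Finset.empty_subset X⟩ :
        {F : Finset (Fin n) // M.IsFlat F ∧ F ⊆ X}) = ⟨X, hXflat, subset_rfl⟩ := by
      rw [← e.apply_symm_apply ⟨∅, M.isFlat_empty hM, Finset.empty_subset X⟩,
        ← e.apply_symm_apply ⟨X, hXflat, subset_rfl⟩]
      congr 1
      funext i
      exact i.elim0
    exact hXne (congrArg Subtype.val h1).symm
  -- assignment of members of T to maximal elements
  have hch : ∀ H ∈ T, ∃ i, H ⊆ g i := fun H hH =>
    hgcover H (hTmem H hH).1 (hsubX H hH)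
  set jm : Finset (Fin n) → Fin k :=
    fun H => if h : H ∈ T then (hch H h).choose else ⟨0, hk⟩ with hjmdef
  have hjm : ∀ H ∈ T, H ⊆ g (jm H) := by
    intro H hH
    simp only [hjmdef, dif_pos hH]
    exact (hch H hH).choose_spec
  set Ti : Fin k → Finset (Finset (Fin n)) := fun i => T.filter (fun H => jm H = i) with hTidef
  have hTiT : ∀ i, Ti i ⊆ T := fun i => Finset.filter_subset _ _
  have hTisub : ∀ i, (Ti i).sup id ⊆ g i := by
    intro i
    intro y hy
    rw [Finset.mem_sup] at hy
    obtain ⟨H, hH, hyH⟩ := hy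
    rw [hTidef, Finset.mem_filter] at hH
    rw [← hH.2]
    exact hjm H hH.1 hyH
  set Y : Fin k → Finset (Fin n) := fun i => M.closure ((Ti i).sup id) with hYdef
  have hYflat : ∀ i, M.IsFlat (Y i) := fun i => M.isFlat_closure _
  have hYsub : ∀ i, Y i ⊆ g i := fun i => M.closure_subset_flat (hgflat i) (hTisub i)
  -- the top tuple maps to X
  have hXcl : X = M.closure (Finset.univ.sup g) := by
    refine le_antisymm ?_ ?_
    · set yX := e.symm ⟨X, hXflat, subset_rfl⟩ with hyX
      have h1 : X = M.closure (Finset.univ.sup fun i => (yX i).1) := by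
        have h2 := he yX
        rw [hyX, e.apply_symm_apply] at h2
        exact h2
      rw [h1]
      exact M.closure_mono (Finset.sup_mono_fun fun i _ => (yX i).2.2)
    · have h3 : Finset.univ.sup g ⊆ X := Finset.sup_le fun i _ => (hg₁ i).2
      exact M.closure_subset_flat hXflat h3
  -- the tuple (Y i) also maps to X, hence Y i = g i
  have hsupT : (Finset.univ.sup fun i => (Ti i).sup id) = T.sup id := by
    apply le_antisymm
    · refine Finset.sup_le ?_
      intro i _
      exact Finset.sup_mono (hTiT i)
    refine Finset.sup_le ?_
    intro H hH
    have h1 : H ∈ Ti (jm H) := by rw [hTidef]; exact Finset.mem_filter.2 ⟨hH, rfl⟩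
    exact le_trans (Finset.le_sup (f := id) h1)
      (Finset.le_sup (f := fun i => (Ti i).sup id) (Finset.mem_univ (jm H)))
  have hYg : ∀ i, Y i = g i := by
    have h1 : (e fun i => ⟨Y i, hYflat i, hYsub i⟩) =
        (e fun i => ⟨g i, hgflat i, subset_rfl⟩) := by
      refine Subtype.ext ?_
      rw [he, he]
      show M.closure (Finset.univ.sup fun i => M.closure ((Ti i).sup id)) =
        M.closure (Finset.univ.sup fun i => g i)
      rw [M.closure_sup_closures, hsupT, ← hXdef, hXcl]
    have h2 := e.injective h1
    intro i
    have := congrFun h2 i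
    exact congrArg Subtype.val this
  -- each Ti i is a singleton {g i}
  have hTione : ∀ i, ∃ H ∈ T, Ti i = {H} ∧ g i = H := by
    intro i
    have hne : (Ti i).Nonempty := by
      rw [Finset.nonempty_iff_ne_empty]
      intro h0
      have hy0 : Y i = ∅ := by
        rw [hYdef]
        simp only [h0, Finset.sup_empty]
        exact M.closure_empty hM
      exact hgne i (by rw [← hYg i, hy0])
    have hcard : (Ti i).card < 2 := by
      by_contra hc2
      push_neg at hc2
      have := hS.2 (Ti i) ((hTiT i).trans hT) hc2
        (fun A hA B hB hAB => hinc A (hTiT i hA) B (hTiT i hB) hAB)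
      refine this ?_
      have : M.closure ((Ti i).sup id) = g i := hYg i
      rw [this]
      exact Or.inl (hg₁ i).1
    have : (Ti i).card = 1 := by
      have := Finset.card_pos.mpr hne
      omega
    obtain ⟨H, hH⟩ := Finset.card_eq_one.mp this
    have hHT : H ∈ T := hTiT i (hH ▸ Finset.mem_singleton_self H)
    refine ⟨H, hHT, hH, ?_⟩
    have : Y i = H := by
      rw [hYdef]
      simp only
      rw [hH, Finset.sup_singleton]
      exact M.closure_flat_eq (hTmem H hHT).2.1
    rw [← hYg i, this]
  have hgT : ∀ H ∈ T, g (jm H) = H := by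
    intro H hH
    obtain ⟨H', hH'T, hTieq, hgeq⟩ := hTione (jm H)
    have : H ∈ Ti (jm H) := by rw [hTidef]; exact Finset.mem_filter.2 ⟨hH, rfl⟩
    rw [hTieq, Finset.mem_singleton] at this
    rw [hgeq, ← this]
  -- the maximal elements are pairwise disjoint
  have hgdisj : ∀ i i', i ≠ i' → g i ∩ g i' = ∅ := by
    intro i i' hii
    set P := g i ∩ g i' with hPdef
    have hPflat : M.IsFlat P := M.isFlat_inter (hgflat i) (hgflat i')
    have hu : ∀ l : Fin k, M.IsFlat (if l = i then P else ∅) ∧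
        (if l = i then P else ∅) ⊆ g l := by
      intro l
      by_cases h : l = i
      · subst h; simp only [if_pos rfl]; exact ⟨hPflat, Finset.inter_subset_left⟩
      · simp only [if_neg h]; exact ⟨M.isFlat_empty hM, Finset.empty_subset _⟩
    have hv : ∀ l : Fin k, M.IsFlat (if l = i' then P else ∅) ∧
        (if l = i' then P else ∅) ⊆ g l := by
      intro l
      by_cases h : l = i'
      · subst h; simp only [if_pos rfl]; exact ⟨hPflat, Finset.inter_subset_right⟩
      · simp only [if_neg h]; exact ⟨M.isFlat_empty hM, Finset.empty_subset _⟩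
    have h1 : (e fun l => ⟨if l = i then P else ∅, hu l⟩) =
        (e fun l => ⟨if l = i' then P else ∅, hv l⟩) := by
      refine Subtype.ext ?_
      rw [he, he]
      show M.closure (Finset.univ.sup fun l => if l = i then P else ∅) =
        M.closure (Finset.univ.sup fun l => if l = i' then P else ∅)
      rw [sup_ite_eq i P, sup_ite_eq i' P]
    have h2 := e.injective h1
    have h3 := congrArg Subtype.val (congrFun h2 i)
    simp only [if_pos rfl, if_neg hii] at h3
    exact h3
  have hTdisj : ∀ A ∈ T, ∀ B ∈ T, A ≠ B → A ∩ B = ∅ := by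
    intro A hA B hB hAB
    have hj : jm A ≠ jm B := by
      intro h
      exact hAB (by rw [← hgT A hA, ← hgT B hB, h])
    have := hgdisj (jm A) (jm B) hj
    rw [hgT A hA, hgT B hB] at this
    exact this
  -- independence of unions of independent pieces
  have hindep : ∀ I : Finset (Fin n), I ⊆ T.sup id →
      (∀ H ∈ T, M.Indep (I ∩ H)) → M.Indep I := by
    intro I hIsub hIind
    by_contra hdep
    obtain ⟨C, hCI, hC⟩ := M.exists_circuit_of_dep hdep
    -- every element of C lies in some g i with the corresponding member of T
    have hCloc : ∀ y ∈ C, ∃ H ∈ T, y ∈ H := by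
      intro y hy
      have := hIsub (hCI hy)
      rw [Finset.mem_sup] at this
      obtain ⟨H, hH, hyH⟩ := this
      exact ⟨H, hH, hyH⟩
    by_cases hone : ∃ H ∈ T, C ⊆ H
    · obtain ⟨H, hHT, hCH⟩ := hone
      exact hC.1 ((hIind H hHT).subset M (Finset.subset_inter hCI hCH))
    · push_neg at hone
      have hCne : C.Nonempty := by
        rw [Finset.nonempty_iff_ne_empty]
        intro h0
        exact hC.1 (h0 ▸ M.indep_empty)
      obtain ⟨x, hx⟩ := hCne
      obtain ⟨Hx, hHxT, hxHx⟩ := hCloc x hx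
      set i₀ := jm Hx with hi₀
      have hxg : x ∈ g i₀ := by
        show x ∈ g (jm Hx)
        rw [hgT Hx hHxT]
        exact hxHx
      set A := (C ∩ g i₀).erase x with hAdef
      -- x ∈ closure of the "big" tuple
      have hxW : x ∈ M.closure (Finset.univ.sup fun l =>
          if l = i₀ then M.closure A else g l) := by
      -- C.erase x ⊆ the sup
        have hsub : C.erase x ⊆ Finset.univ.sup fun l =>
            if l = i₀ then M.closure A else g l := by
          intro y hy
          rw [Finset.mem_erase] at hy
          obtain ⟨Hy, hHyT, hyHy⟩ := hCloc y hy.2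
          have hyg : y ∈ g (jm Hy) := by rw [hgT Hy hHyT]; exact hyHy
          rw [Finset.mem_sup]
          by_cases hji : jm Hy = i₀
          · refine ⟨i₀, Finset.mem_univ i₀,
              show y ∈ (if i₀ = i₀ then M.closure A else g i₀) from ?_⟩
            rw [if_pos rfl]
            refine M.subset_closure A ?_
            rw [hAdef, Finset.mem_erase]
            refine ⟨hy.1, Finset.mem_inter.2 ⟨hy.2, ?_⟩⟩
            rw [← hji]
            exact hyg
          · refine ⟨jm Hy, Finset.mem_univ (jm Hy),
              show y ∈ (if jm Hy = i₀ then M.closure A else g (jm Hy)) from ?_⟩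
            rw [if_neg hji]
            exact hyg
        have h1 := M.mem_closure_erase_of_circuit hC hx
        exact M.closure_mono hsub h1
      -- tuples
      have hvcomp : ∀ l : Fin k, M.IsFlat (if l = i₀ then M.closure A else g l) ∧
          (if l = i₀ then M.closure A else g l) ⊆ g l := by
        intro l
        by_cases h : l = i₀
        · subst h
          simp only [if_pos rfl]
          exact ⟨M.isFlat_closure _, M.closure_subset_flat (hgflat _)
            ((Finset.erase_subset x _).trans Finset.inter_subset_right)⟩
        · simp only [if_neg h]; exact ⟨hgflat l, subset_rfl⟩
      have hucomp : ∀ l : Fin k, M.IsFlat (if l = i₀ then M.closure {x} else ∅) ∧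
          (if l = i₀ then M.closure {x} else ∅) ⊆ g l := by
        intro l
        by_cases h : l = i₀
        · subst h
          simp only [if_pos rfl]
          exact ⟨M.isFlat_closure _, M.closure_subset_flat (hgflat _)
            (Finset.singleton_subset_iff.2 hxg)⟩
        · simp only [if_neg h]; exact ⟨M.isFlat_empty hM, Finset.empty_subset _⟩
      have hle : (e fun l => ⟨if l = i₀ then M.closure {x} else ∅, hucomp l⟩) ≤
          (e fun l => ⟨if l = i₀ then M.closure A else g l, hvcomp l⟩) := by
        rw [← Subtype.coe_le_coe, he, he]
        show M.closure (Finset.univ.sup fun l => if l = i₀ then M.closure {x} else ∅) ⊆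
          M.closure (Finset.univ.sup fun l => if l = i₀ then M.closure A else g l)
        rw [sup_ite_eq i₀ (M.closure {x}), M.closure_flat_eq (M.isFlat_closure _)]
        exact M.closure_subset_flat (M.isFlat_closure _) (Finset.singleton_subset_iff.2 hxW)
      have hle2 := (OrderIso.le_iff_le e).1 hle
      have h4 : M.closure {x} ⊆ M.closure A := by
        have h5 := hle2 i₀
        rw [← Subtype.coe_le_coe] at h5
        simpa using h5
      have hxA : x ∈ M.closure A := h4 (M.subset_closure {x} (Finset.mem_singleton_self x))
      have hxnA : x ∉ A := Finset.notMem_erase x _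
      have hgHx : g i₀ = Hx := hgT Hx hHxT
      have hins : M.Indep (insert x A) := by
        have hxCg : x ∈ C ∩ g i₀ := Finset.mem_inter.2 ⟨hx, hxg⟩
        have heq : insert x A = C ∩ g i₀ := Finset.insert_erase hxCg
        rw [heq]
        refine (hIind Hx hHxT).subset M ?_
        rw [hgHx]
        exact Finset.inter_subset_inter hCI subset_rfl
      exact M.not_mem_closure_of_indep_insert hxnA hins hxA
  refine ⟨hTdisj, hindep, ?_⟩
  -- rank additivity
  have hle1 : M.rk X ≤ ∑ H ∈ T, M.rk H := by
    rw [hXdef, M.rk_closure]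
    exact M.rk_sup_le T
  have hge : ∑ H ∈ T, M.rk H ≤ M.rk X := by
    have hch2 : ∀ H ∈ T, ∃ I, I ⊆ H ∧ M.Indep I ∧ I.card = M.rk H :=
      fun H _ => M.exists_max_indep H
    set f : Finset (Fin n) → Finset (Fin n) :=
      fun H => if h : H ∈ T then (hch2 H h).choose else ∅ with hfdef
    have hf : ∀ H ∈ T, f H ⊆ H ∧ M.Indep (f H) ∧ (f H).card = M.rk H := by
      intro H hH
      simp only [hfdef, dif_pos hH]
      exact (hch2 H hH).choose_spec
    set I := T.biUnion f with hIdef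
    have hIsub : I ⊆ T.sup id := by
      rw [hIdef]
      intro y hy
      rw [Finset.mem_biUnion] at hy
      obtain ⟨H, hH, hyH⟩ := hy
      exact Finset.le_sup (f := id) hH ((hf H hH).1 hyH)
    have hIH : ∀ H ∈ T, I ∩ H = f H := by
      intro H hH
      refine le_antisymm ?_
        (Finset.subset_inter (Finset.subset_biUnion_of_mem f hH) (hf H hH).1)
      intro y hy
      rw [Finset.mem_inter, hIdef, Finset.mem_biUnion] at hy
      obtain ⟨⟨H', hH', hyH'⟩, hyH⟩ := hy
      by_cases hHH : H' = H
      · exact hHH ▸ hyH'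
      · have hd := hTdisj H' hH' H hH hHH
        have hyint : y ∈ H' ∩ H := Finset.mem_inter.2 ⟨(hf H' hH').1 hyH', hyH⟩
        rw [hd] at hyint
        exact absurd hyint (Finset.notMem_empty y)
    have hIind : M.Indep I := hindep I hIsub (fun H hH => (hIH H hH) ▸ (hf H hH).2.1)
    have hIcard : I.card = ∑ H ∈ T, M.rk H := by
      rw [hIdef, Finset.card_biUnion]
      · exact Finset.sum_congr rfl fun H hH => (hf H hH).2.2
      · intro A hA B hB hAB
        rw [Function.onFun, Finset.disjoint_left]
        intro y hyA hyB
        have hd := hTdisj A hA B hB hAB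
        have hyint : y ∈ A ∩ B := Finset.mem_inter.2 ⟨(hf A hA).1 hyA, (hf B hB).1 hyB⟩
        rw [hd] at hyint
        exact absurd hyint (Finset.notMem_empty y)
    rw [← hIcard]
    exact M.card_le_rk (hIsub.trans (M.subset_closure _)) hIind
  exact le_antisymm hle1 hge

/-! ### Maximal members of a finite family -/

lemma maximal_cover (U : Finset (Finset (Fin n))) :
    ∀ H ∈ U, ∃ H' ∈ U.filter (fun A => ∀ B ∈ U, A ⊆ B → A = B), H ⊆ H' := by
  classical
  intro H hH
  have hne : (U.filter (fun B => H ⊆ B)).Nonempty := ⟨H, Finset.mem_filter.2 ⟨hH, subset_rfl⟩⟩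
  obtain ⟨B₀, hB₀, hmax⟩ := Finset.exists_max_image _ Finset.card hne
  rw [Finset.mem_filter] at hB₀
  refine ⟨B₀, Finset.mem_filter.2 ⟨hB₀.1, fun B hB hB₀B => ?_⟩, hB₀.2⟩
  refine Finset.eq_of_subset_of_card_le hB₀B ?_
  exact hmax B (Finset.mem_filter.2 ⟨hB, hB₀.2.trans hB₀B⟩)

lemma maximal_sup_eq (U : Finset (Finset (Fin n))) :
    (U.filter (fun A => ∀ B ∈ U, A ⊆ B → A = B)).sup id = U.sup id := by
  classical
  apply le_antisymm
  · exact Finset.sup_mono (Finset.filter_subset _ _)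
  · intro y hy
    rw [Finset.mem_sup] at hy ⊢
    obtain ⟨H, hH, hyH⟩ := hy
    obtain ⟨H', hH', hHH'⟩ := maximal_cover U H hH
    exact ⟨H', hH', hHH' hyH⟩

lemma maximal_incomp (U : Finset (Finset (Fin n))) :
    ∀ A ∈ U.filter (fun A => ∀ B ∈ U, A ⊆ B → A = B),
    ∀ B ∈ U.filter (fun A => ∀ B ∈ U, A ⊆ B → A = B),
      A ≠ B → ¬ A ⊆ B ∧ ¬ B ⊆ A := by
  classical
  intro A hA B hB hAB
  rw [Finset.mem_filter] at hA hB
  exact ⟨fun h => hAB (hA.2 B hB.1 h), fun h => hAB.symm (hB.2 A hA.1 h)⟩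

/-! ### The key counting lemma -/

lemma inter_FG_card (hM : M.Loopless) {𝓖 : Set (Finset (Fin n))}
    (h𝓖 : M.IsFlatBuilding 𝓖) {S : Finset (Finset (Fin n))}
    (hS : M.IsNested (𝓖 ∪ {Finset.univ}) S) {σ G : Finset (Fin n)} (hσ : M.Indep σ)
    (hch : ∀ H ∈ S, H ⊂ G → (σ ∩ H).card = M.rk H) :
    (σ ∩ M.closure ((S.filter fun H => H ⊂ G).sup id)).card
      = M.rk (M.closure ((S.filter fun H => H ⊂ G).sup id)) := by
  classical
  set U := S.filter fun H => H ⊂ G with hUdef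
  set T := U.filter (fun A => ∀ B ∈ U, A ⊆ B → A = B) with hTdef
  have hTU : T ⊆ U := Finset.filter_subset _ _
  have hUS : U ⊆ S := Finset.filter_subset _ _
  have hUlt : ∀ H ∈ U, H ⊂ G := by
    intro H hH; rw [hUdef, Finset.mem_filter] at hH; exact hH.2
  have huniv : Finset.univ ∉ T := by
    intro h
    exact (hUlt _ (hTU h)).2 (Finset.subset_univ G)
  obtain ⟨hdisj, hind, hrk⟩ := M.nested_structure hM h𝓖 hS (hTU.trans hUS)
    (maximal_incomp U) huniv
  have hsupeq : T.sup id = U.sup id := maximal_sup_eq U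
  rw [← hsupeq]
  refine le_antisymm
    (M.card_le_rk Finset.inter_subset_right (hσ.subset M Finset.inter_subset_left)) ?_
  set J := T.biUnion (fun H => σ ∩ H) with hJdef
  have hJsub : J ⊆ σ ∩ M.closure (T.sup id) := by
    intro y hy
    rw [hJdef, Finset.mem_biUnion] at hy
    obtain ⟨H, hH, hyH⟩ := hy
    rw [Finset.mem_inter] at hyH
    refine Finset.mem_inter.2 ⟨hyH.1, ?_⟩
    have h1 : id H ⊆ T.sup id := Finset.le_sup (f := id) hH
    exact (M.subset_closure _) (h1 hyH.2)
  have hJcard : J.card = ∑ H ∈ T, M.rk H := by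
    rw [hJdef, Finset.card_biUnion]
    · refine Finset.sum_congr rfl fun H hH => ?_
      exact hch H (hUS (hTU hH)) (hUlt H (hTU hH))
    · intro A hA B hB hAB
      rw [Function.onFun, Finset.disjoint_left]
      intro y hyA hyB
      have hd := hdisj A hA B hB hAB
      have : y ∈ A ∩ B := Finset.mem_inter.2
        ⟨(Finset.mem_inter.mp hyA).2, (Finset.mem_inter.mp hyB).2⟩
      rw [hd] at this
      exact absurd this (Finset.notMem_empty y)
  calc M.rk (M.closure (T.sup id)) = ∑ H ∈ T, M.rk H := hrk
    _ = J.card := hJcard.symm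
    _ ≤ (σ ∩ M.closure (T.sup id)).card := Finset.card_le_card hJsub

/-! ### Existence of a basis transversal to all members of the nested family -/

lemma exists_transversal (hM : M.Loopless) {𝓖 : Set (Finset (Fin n))}
    (h𝓖 : M.IsFlatBuilding 𝓖) {S : Finset (Finset (Fin n))}
    (hS : M.IsNested (𝓖 ∪ {Finset.univ}) S) (htop : Finset.univ ∈ S) :
    ∃ τ ∈ M.bases, ∀ G ∈ S, (τ ∩ G).card = M.rk G := by
  classical
  have key : ∀ m : ℕ, ∀ G ∈ S, G.card ≤ m →
      ∃ I, I ⊆ G ∧ M.Indep I ∧ I.card = M.rk G ∧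
        ∀ H ∈ S, H ⊆ G → (I ∩ H).card = M.rk H := by
    intro m
    induction m with
    | zero =>
      intro G hG hGc
      have hGe : G = ∅ := Finset.card_eq_zero.mp (Nat.le_zero.mp hGc)
      subst hGe
      refine ⟨∅, subset_rfl, M.indep_empty, by rw [M.rk_empty, Finset.card_empty], ?_⟩
      intro H hH hHsub
      rw [Finset.subset_empty.mp hHsub, M.rk_empty]
      simp
    | succ m ih =>
      intro G hG hGc
      set U := S.filter fun H => H ⊂ G with hUdef
      set T := U.filter (fun A => ∀ B ∈ U, A ⊆ B → A = B) with hTdef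
      have hTU : T ⊆ U := Finset.filter_subset _ _
      have hUS : U ⊆ S := Finset.filter_subset _ _
      have hUlt : ∀ H ∈ U, H ⊂ G := by
        intro H hH; rw [hUdef, Finset.mem_filter] at hH; exact hH.2
      have huniv : Finset.univ ∉ T := fun h => (hUlt _ (hTU h)).2 (Finset.subset_univ G)
      obtain ⟨hdisj, hind, hrk⟩ := M.nested_structure hM h𝓖 hS (hTU.trans hUS)
        (maximal_incomp U) huniv
      -- choose transversal independent sets in the children
      have hch : ∀ H ∈ T, ∃ I, I ⊆ H ∧ M.Indep I ∧ I.card = M.rk H ∧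
          ∀ H' ∈ S, H' ⊆ H → (I ∩ H').card = M.rk H' := by
        intro H hH
        have hHlt := hUlt H (hTU hH)
        have := Finset.card_lt_card hHlt
        exact ih H (hUS (hTU hH)) (by omega)
      set f : Finset (Fin n) → Finset (Fin n) :=
        fun H => if h : H ∈ T then (hch H h).choose else ∅ with hfdef
      have hf : ∀ H ∈ T, f H ⊆ H ∧ M.Indep (f H) ∧ (f H).card = M.rk H ∧
          ∀ H' ∈ S, H' ⊆ H → (f H ∩ H').card = M.rk H' := by
        intro H hH
        simp only [hfdef, dif_pos hH]
        exact (hch H hH).choose_spec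
      set I := T.biUnion f with hIdef
      have hIsub : I ⊆ T.sup id := by
        intro y hy
        rw [hIdef, Finset.mem_biUnion] at hy
        obtain ⟨H, hH, hyH⟩ := hy
        exact Finset.le_sup (f := id) hH ((hf H hH).1 hyH)
      have hIH : ∀ H ∈ T, I ∩ H = f H := by
        intro H hH
        refine le_antisymm ?_
          (Finset.subset_inter (Finset.subset_biUnion_of_mem f hH) (hf H hH).1)
        intro y hy
        rw [Finset.mem_inter, hIdef, Finset.mem_biUnion] at hy
        obtain ⟨⟨H', hH', hyH'⟩, hyH⟩ := hy
        by_cases hHH : H' = H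
        · exact hHH ▸ hyH'
        · have hd := hdisj H' hH' H hH hHH
          have hyint : y ∈ H' ∩ H := Finset.mem_inter.2 ⟨(hf H' hH').1 hyH', hyH⟩
          rw [hd] at hyint
          exact absurd hyint (Finset.notMem_empty y)
      have hIind : M.Indep I := hind I hIsub (fun H hH => (hIH H hH) ▸ (hf H hH).2.1)
      have hIcard : I.card = M.rk (M.closure (T.sup id)) := by
        rw [hrk, hIdef, Finset.card_biUnion]
        · exact Finset.sum_congr rfl fun H hH => (hf H hH).2.2.1
        · intro A hA B hB hAB
          rw [Function.onFun, Finset.disjoint_left]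
          intro y hyA hyB
          have hd := hdisj A hA B hB hAB
          have hyint : y ∈ A ∩ B := Finset.mem_inter.2 ⟨(hf A hA).1 hyA, (hf B hB).1 hyB⟩
          rw [hd] at hyint
          exact absurd hyint (Finset.notMem_empty y)
      -- extend within G
      have hIG : I ⊆ G := by
        refine hIsub.trans ?_
        intro y hy
        rw [Finset.mem_sup] at hy
        obtain ⟨H, hH, hyH⟩ := hy
        exact (hUlt H (hTU hH)).1 hyH
      obtain ⟨K, hIK, hKG, hKind, hKcard⟩ := M.exists_extend hIG hIind
      refine ⟨K, hKG, hKind, hKcard, ?_⟩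
      intro H hH hHG
      by_cases hHeq : H = G
      · subst hHeq
        rw [Finset.inter_eq_left.2 hKG, hKcard]
      · have hHU : H ∈ U := by
          rw [hUdef, Finset.mem_filter]
          exact ⟨hH, Finset.ssubset_iff_subset_ne.2 ⟨hHG, hHeq⟩⟩
        obtain ⟨H₀, hH₀, hHH₀⟩ := maximal_cover U H hHU
        refine le_antisymm
          (M.card_le_rk Finset.inter_subset_right (hKind.subset M Finset.inter_subset_left)) ?_
        have hfsub : f H₀ ∩ H ⊆ K ∩ H := by
          refine Finset.inter_subset_inter ?_ subset_rfl
          exact ((Finset.subset_biUnion_of_mem f hH₀).trans hIK)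
        have := (hf H₀ hH₀).2.2.2 H hH hHH₀
        rw [← this]
        exact Finset.card_le_card hfsub
  obtain ⟨I, hIsub, hIind, hIcard, hItr⟩ := key (Finset.univ : Finset (Fin n)).card
    Finset.univ htop le_rfl
  have hIb : I ∈ M.bases := M.mem_bases_of_indep_card hIind (by rw [hIcard, M.rk_univ])
  exact ⟨I, hIb, fun G hG => hItr G hG (Finset.subset_univ G)⟩
end FinMatroid

/-- Let `S ∋ [n]` be nested with respect to `𝓖 ∪ {[n]}` and
`w = ∑_{G ∈ S, G ≠ [n]} c_G e_G` with `c_G > 0`.  A basis `σ` of `M` is `w`-maximal iff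
for every `G ∈ S`, the set `(σ ∩ G) \ F_{<G}` is a basis of the minor `(M|G)/F_{<G}`,
where `F_{<G}` is the closure of the union of the members of `S` properly contained in
`G`; that is, `M_w` is the direct sum of the matroids `(M|G)/F_{<G}`, `G ∈ S`. -/
theorem statement15 {n r : ℕ} (M : FinMatroid n r) (hM : M.Loopless)
    (𝓖 : Set (Finset (Fin n))) (h𝓖 : M.IsFlatBuilding 𝓖)
    (S : Finset (Finset (Fin n))) (hS : M.IsNested (𝓖 ∪ {Finset.univ}) S)
    (htop : Finset.univ ∈ S)
    (c : Finset (Fin n) → ℝ) (hc : ∀ G ∈ S.erase Finset.univ, 0 < c G)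
    (w : Fin n → ℝ)
    (hw : w = fun i => ∑ G ∈ S.erase Finset.univ, c G * indVec G i) :
    ∀ σ ∈ M.bases,
      (M.IsMaxBasis w σ ↔
        ∀ G ∈ S,
          (σ ∩ G) \ (M.closure ((S.filter fun H => H ⊂ G).sup id)) ∈
            famContractBases (M.restrictBases G)
              (M.closure ((S.filter fun H => H ⊂ G).sup id))) := by
  classical
  intro σ hσ
  have hσind : M.Indep σ := M.indep_of_mem_bases hσ
  -- weight of any set in terms of intersection cardinalities
  have hwsum : ∀ B : Finset (Fin n), ∑ i ∈ B, w i
      = ∑ G ∈ S.erase Finset.univ, c G * ((B ∩ G).card : ℝ) := by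
    intro B
    rw [hw]
    rw [Finset.sum_comm]
    refine Finset.sum_congr rfl fun G _ => ?_
    rw [← Finset.mul_sum]
    congr 1
    have h1 : ∀ i : Fin n, indVec G i = if i ∈ G then (1 : ℝ) else 0 := fun _ => rfl
    calc ∑ i ∈ B, indVec G i = ∑ i ∈ B, if i ∈ G then (1 : ℝ) else 0 :=
          Finset.sum_congr rfl fun i _ => h1 i
      _ = ∑ i ∈ B ∩ G, (1 : ℝ) := Finset.sum_ite_mem B G (fun _ => (1 : ℝ))
      _ = ((B ∩ G).card : ℝ) := by rw [Finset.sum_const, nsmul_eq_mul, mul_one]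
  obtain ⟨τ, hτb, hτtr⟩ := M.exists_transversal hM h𝓖 hS htop
  have hcard_le : ∀ B ∈ M.bases, ∀ G : Finset (Fin n), (B ∩ G).card ≤ M.rk G := by
    intro B hB G
    exact M.card_le_rk Finset.inter_subset_right
      ((M.indep_of_mem_bases hB).subset M Finset.inter_subset_left)
  -- characterization of maximal bases
  have hmax_iff : M.IsMaxBasis w σ ↔
      ∀ G ∈ S.erase Finset.univ, (σ ∩ G).card = M.rk G := by
    constructor
    · intro hmx G hG
      have hG' : G ∈ S := Finset.mem_of_mem_erase hG
      by_contra hne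
      have hlt : (σ ∩ G).card < M.rk G := lt_of_le_of_ne (hcard_le σ hσ G) hne
      have hτw := hmx.2 τ hτb
      rw [hwsum, hwsum] at hτw
      have hterm : ∀ G' ∈ S.erase Finset.univ,
          c G' * (((σ ∩ G').card : ℕ) : ℝ) ≤ c G' * ((M.rk G' : ℕ) : ℝ) := by
        intro G' hG'e
        exact mul_le_mul_of_nonneg_left
          (Nat.cast_le.2 (hcard_le σ hσ G')) (le_of_lt (hc G' hG'e))
      have hstrict : ∑ G' ∈ S.erase Finset.univ, c G' * (((σ ∩ G').card : ℕ) : ℝ)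
          < ∑ G' ∈ S.erase Finset.univ, c G' * ((M.rk G' : ℕ) : ℝ) :=
        Finset.sum_lt_sum hterm
          ⟨G, hG, mul_lt_mul_of_pos_left (Nat.cast_lt.2 hlt) (hc G hG)⟩
      have hτeq : ∑ G' ∈ S.erase Finset.univ, c G' * (((τ ∩ G').card : ℕ) : ℝ)
          = ∑ G' ∈ S.erase Finset.univ, c G' * ((M.rk G' : ℕ) : ℝ) :=
        Finset.sum_congr rfl fun G' hG' => by
          rw [hτtr G' (Finset.mem_of_mem_erase hG')]
      rw [hτeq] at hτw
      exact absurd (lt_of_le_of_lt hτw hstrict) (lt_irrefl _)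
    · intro hcards
      refine ⟨hσ, fun B hB => ?_⟩
      rw [hwsum, hwsum]
      refine Finset.sum_le_sum fun G hG => ?_
      rw [hcards G hG]
      exact mul_le_mul_of_nonneg_left
        (Nat.cast_le.2 (hcard_le B hB G)) (le_of_lt (hc G hG))
  have hGflat : ∀ G ∈ S, M.IsFlat G := by
    intro G hG
    rcases hS.1 hG with h | h
    · exact (h𝓖.1 G h).1
    · rw [Set.mem_singleton_iff] at h
      subst h
      exact M.isFlat_univ
  have hFGsub : ∀ G ∈ S, M.closure ((S.filter fun H => H ⊂ G).sup id) ⊆ G := by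
    intro G hG
    refine M.closure_subset_flat (hGflat G hG) ?_
    intro y hy
    rw [Finset.mem_sup] at hy
    obtain ⟨H, hH, hyH⟩ := hy
    rw [Finset.mem_filter] at hH
    exact hH.2.subset hyH
  constructor
  · -- maximal basis ⟹ direct-sum condition
    intro hmx G hG
    have hcards : ∀ G' ∈ S, (σ ∩ G').card = M.rk G' := by
      intro G' hG'
      by_cases hu : G' = Finset.univ
      · subst hu
        rw [Finset.inter_univ, M.card_bases σ hσ, M.rk_univ]
      · exact hmax_iff.1 hmx G' (Finset.mem_erase.2 ⟨hu, hG'⟩)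
    set FG := M.closure ((S.filter fun H => H ⊂ G).sup id) with hFGdef
    have hFGcard : (σ ∩ FG).card = M.rk FG :=
      M.inter_FG_card hM h𝓖 hS hσind (fun H hH _ => hcards H hH)
    rw [famContractBases]
    refine Finset.mem_image.2 ⟨σ ∩ G, ?_, rfl⟩
    rw [Finset.mem_filter]
    constructor
    · exact M.mem_restrictBases_iff.2 ⟨Finset.inter_subset_right,
        hσind.subset M Finset.inter_subset_left, hcards G hG⟩
    · rw [M.famRk_restrict (hFGsub G hG)]
      have h2 : σ ∩ G ∩ FG = σ ∩ FG := by
        rw [Finset.inter_assoc, Finset.inter_eq_right.2 (hFGsub G hG)]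
      rw [h2, hFGcard]
  · -- direct-sum condition ⟹ maximal basis
    intro hcond
    have key : ∀ m : ℕ, ∀ G ∈ S, G.card ≤ m → (σ ∩ G).card = M.rk G := by
      intro m
      induction m with
      | zero =>
        intro G hG hGc
        rw [Finset.card_eq_zero.mp (Nat.le_zero.mp hGc), Finset.inter_empty,
          Finset.card_empty, M.rk_empty]
      | succ m ih =>
        intro G hG hGc
        set FG := M.closure ((S.filter fun H => H ⊂ G).sup id) with hFGdef
        have hFGcard : (σ ∩ FG).card = M.rk FG := by
          refine M.inter_FG_card hM h𝓖 hS hσind (fun H hH hHG => ?_)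
          have := Finset.card_lt_card hHG
          exact ih H hH (by omega)
        have hc' := hcond G hG
        rw [famContractBases, Finset.mem_image] at hc'
        obtain ⟨B, hB, hBeq⟩ := hc'
        rw [Finset.mem_filter] at hB
        obtain ⟨hB1, hB2⟩ := hB
        rw [M.mem_restrictBases_iff] at hB1
        obtain ⟨hBG, hBind, hBcard⟩ := hB1
        rw [M.famRk_restrict (hFGsub G hG)] at hB2
        rw [← hFGdef] at hB2
        have e1 : (σ ∩ G ∩ FG).card + ((σ ∩ G) \ FG).card = (σ ∩ G).card :=
          Finset.card_inter_add_card_sdiff (σ ∩ G) FG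
        have e2 : (B ∩ FG).card + (B \ FG).card = B.card :=
          Finset.card_inter_add_card_sdiff B FG
        have e3 : σ ∩ G ∩ FG = σ ∩ FG := by
          rw [Finset.inter_assoc, Finset.inter_eq_right.2 (hFGsub G hG)]
        have e4 : ((σ ∩ G) \ FG).card = (B \ FG).card := by rw [hBeq]
        have e5 : M.rk FG ≤ M.rk G := M.rk_mono (hFGsub G hG)
        rw [e3, hFGcard] at e1
        omega
    exact hmax_iff.2 fun G hG => key G.card G (Finset.mem_of_mem_erase hG) le_rfl
end
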